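/- arXiv:2105.06347 — 8 statements merged into one kernel-verified Lean document; each statement's English description precedes it below -/
import Mathlib

section
/- If P is an irreducible and reversible Markov chain on state space [d] with stationary distribution π, and S is a nonempty subset of [d], then the censored (watched) chain P_cen(S), defined by P_cen(S) = P_S + Σ_{t=1}^∞ P_{S,S^c} (P_{S^c})^t P_{S^c,S}, is reversible with respect to the distribution π_S(i) = π(i)/π(S). -/
open Matrix BigOperators Finset

noncomputable def rho {n : Type*} [Fintype n] [DecidableEq n] (A : Matrix n n ℝ) : ℝ :=
  (spectralRadius ℂ (A.map (algebraMap ℝ ℂ))).toReal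

noncomputable def sqrtm {m n : Type*} (A : Matrix m n ℝ) : Matrix m n ℝ :=
  Matrix.of fun i j => Real.sqrt (A i j)

noncomputable def mcDist {n : Type*} [Fintype n] [DecidableEq n] (P Q : Matrix n n ℝ) : ℝ :=
  1 - rho (sqrtm (Matrix.hadamard P Q))

def IsStochastic {d : ℕ} (P : Matrix (Fin d) (Fin d) ℝ) : Prop :=
  (∀ i j, 0 ≤ P i j) ∧ ∀ i, ∑ j, P i j = 1

def IsIrreducibleMC {d : ℕ} (P : Matrix (Fin d) (Fin d) ℝ) : Prop :=
  ∀ i j, ∃ k, 0 < (P ^ k) i j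

def IsStationaryMC {d : ℕ} (P : Matrix (Fin d) (Fin d) ℝ) (π : Fin d → ℝ) : Prop :=
  (∀ i, 0 < π i) ∧ (∑ i, π i = 1) ∧ ∀ j, ∑ i, π i * P i j = π j

def IsReversible {d : ℕ} (P : Matrix (Fin d) (Fin d) ℝ) (π : Fin d → ℝ) : Prop :=
  ∀ i j, π i * P i j = π j * P j i

def subm {d : ℕ} (P : Matrix (Fin d) (Fin d) ℝ) (R T : Finset (Fin d)) :
    Matrix {x // x ∈ R} {x // x ∈ T} ℝ :=
  Matrix.of fun i j => P i.1 j.1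

noncomputable def censored {d : ℕ} (P : Matrix (Fin d) (Fin d) ℝ) (S : Finset (Fin d)) :
    Matrix {x // x ∈ S} {x // x ∈ S} ℝ :=
  subm P S S + ∑' t : ℕ, subm P S Sᶜ * (subm P Sᶜ Sᶜ) ^ (t + 1) * subm P Sᶜ S

/-- The censored (watched) chain of an irreducible reversible Markov chain on a
nonempty subset `S` is reversible with respect to `π_S(i) = π(i)/π(S)`. -/
theorem censored_reversible {d : ℕ} (P : Matrix (Fin d) (Fin d) ℝ) (π : Fin d → ℝ)
    (hP : IsStochastic P) (hirr : IsIrreducibleMC P)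
    (hstat : IsStationaryMC P π) (hrev : IsReversible P π)
    (S : Finset (Fin d)) (hS : S.Nonempty) :
    ∀ i j : {x // x ∈ S},
      (π i.1 / ∑ k ∈ S, π k) * censored P S i j
        = (π j.1 / ∑ k ∈ S, π k) * censored P S j i := by
  classical
  -- symmetry of powers of the restricted kernel
  have Qsym : ∀ (n : ℕ) (a b : {x // x ∈ Sᶜ}),
      π a.1 * ((subm P Sᶜ Sᶜ) ^ n) a b = π b.1 * ((subm P Sᶜ Sᶜ) ^ n) b a := by
    intro n
    induction n with
    | zero =>
      intro a b
      rcases eq_or_ne a b with h | h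
      · subst h; rfl
      · simp [Matrix.one_apply_ne, h, h.symm]
    | succ n ih =>
      intro a b
      have h1 : π a.1 * ((subm P Sᶜ Sᶜ) ^ (n + 1)) a b
          = ∑ c, ((subm P Sᶜ Sᶜ) ^ n) c a * (π c.1 * subm P Sᶜ Sᶜ c b) := by
        rw [pow_succ, Matrix.mul_apply, Finset.mul_sum]
        refine Finset.sum_congr rfl fun c _ => ?_
        linear_combination subm P Sᶜ Sᶜ c b * ih a c
      rw [h1]
      have h2 : ∀ c : {x // x ∈ Sᶜ},
          π c.1 * subm P Sᶜ Sᶜ c b = π b.1 * subm P Sᶜ Sᶜ b c := fun c => hrev c.1 b.1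
      calc ∑ c, ((subm P Sᶜ Sᶜ) ^ n) c a * (π c.1 * subm P Sᶜ Sᶜ c b)
          = ∑ c, π b.1 * (subm P Sᶜ Sᶜ b c * ((subm P Sᶜ Sᶜ) ^ n) c a) := by
            refine Finset.sum_congr rfl fun c _ => ?_; rw [h2 c]; ring
        _ = π b.1 * ((subm P Sᶜ Sᶜ) ^ (n + 1)) b a := by
            rw [pow_succ', Matrix.mul_apply, Finset.mul_sum]
  -- symmetry of each term of the series
  set f : ℕ → Matrix {x // x ∈ S} {x // x ∈ S} ℝ :=
    fun t => subm P S Sᶜ * (subm P Sᶜ Sᶜ) ^ (t + 1) * subm P Sᶜ S with hf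
  have fsym : ∀ (t : ℕ) (i j : {x // x ∈ S}),
      π i.1 * f t i j = π j.1 * f t j i := by
    intro t i j
    have expand : ∀ u v : {x // x ∈ S},
        f t u v = ∑ b, ∑ a, subm P S Sᶜ u a * ((subm P Sᶜ Sᶜ) ^ (t + 1)) a b
          * subm P Sᶜ S b v := by
      intro u v
      simp only [hf, Matrix.mul_apply, Finset.sum_mul]
    rw [expand i j, expand j i, Finset.mul_sum, Finset.mul_sum]
    simp only [Finset.mul_sum]
    rw [Finset.sum_comm (s := Finset.univ) (t := Finset.univ)
      (f := fun b a => π j.1 * (subm P S Sᶜ j a * ((subm P Sᶜ Sᶜ) ^ (t + 1)) a b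
        * subm P Sᶜ S b i))]
    refine Finset.sum_congr rfl fun b _ => Finset.sum_congr rfl fun a _ => ?_
    have hia : π i.1 * P i.1 a.1 = π a.1 * P a.1 i.1 := hrev i.1 a.1
    have hbj : π b.1 * P b.1 j.1 = π j.1 * P j.1 b.1 := hrev b.1 j.1
    have hab := Qsym (t + 1) a b
    show π i.1 * (P i.1 a.1 * ((subm P Sᶜ Sᶜ) ^ (t + 1)) a b * P b.1 j.1)
      = π j.1 * (P j.1 b.1 * ((subm P Sᶜ Sᶜ) ^ (t + 1)) b a * P a.1 i.1)
    linear_combination (((subm P Sᶜ Sᶜ) ^ (t + 1)) a b * P b.1 j.1) * hia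
      + (P a.1 i.1 * P b.1 j.1) * hab + (P a.1 i.1 * ((subm P Sᶜ Sᶜ) ^ (t + 1)) b a) * hbj
  -- main unnormalized symmetry
  have key : ∀ i j : {x // x ∈ S},
      π i.1 * censored P S i j = π j.1 * censored P S j i := by
    intro i j
    have hsub : ∀ u v : {x // x ∈ S},
        censored P S u v = P u.1 v.1 + (∑' t, f t) u v := by
      intro u v; rfl
    rw [hsub i j, hsub j i]
    by_cases hsum : Summable f
    · have happ : ∀ u v : {x // x ∈ S}, (∑' t, f t) u v = ∑' t, f t u v := by
        intro u v
        have h1 : (∑' t, f t) u = ∑' t, f t u := tsum_apply hsum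
        have h2 : Summable fun t => f t u := Pi.summable.mp hsum u
        rw [h1, tsum_apply h2]
      rw [happ i j, happ j i, mul_add, mul_add, hrev i.1 j.1,
        ← tsum_mul_left, ← tsum_mul_left]
      congr 1
      exact tsum_congr fun t => fsym t i j
    · rw [tsum_eq_zero_of_not_summable hsum]
      simp only [Matrix.zero_apply, add_zero]
      exact hrev i.1 j.1
  intro i j
  rw [div_mul_eq_mul_div, div_mul_eq_mul_div, key i j]
end

section
/- Let P and P̄ be irreducible Markov chains on [d] with stationary distributions π and π̄, respectively, and let P* = diag(π)^{-1} Pᵀ diag(π) and P̄* = diag(π̄)^{-1} P̄ᵀ diag(π̄) denote their time reversals. Then ρ(√(P*∘P̄*)) = ρ(√(P∘P̄)), i.e., Distance(P*,P̄*) = Distance(P,P̄). -/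
open Matrix BigOperators Finset

def IsStationaryDist {d : ℕ} (P : Matrix (Fin d) (Fin d) ℝ) (π : Fin d → ℝ) : Prop :=
  (∀ i, 0 < π i) ∧ (∑ i, π i = 1) ∧ ∀ j, ∑ i, π i * P i j = π j

/-- The time reversal `P* = diag(π)⁻¹ Pᵀ diag(π)`. -/
noncomputable def timeReversal {d : ℕ} (P : Matrix (Fin d) (Fin d) ℝ) (π : Fin d → ℝ) :
    Matrix (Fin d) (Fin d) ℝ :=
  Matrix.of fun i j => π j * P j i / π i

lemma spectrum_transpose' {n : Type*} [Fintype n] [DecidableEq n] (A : Matrix n n ℂ) :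
    spectrum ℂ Aᵀ = spectrum ℂ A := by
  ext μ
  rw [spectrum.mem_iff, spectrum.mem_iff, not_iff_not]
  have : algebraMap ℂ (Matrix n n ℂ) μ - Aᵀ = (algebraMap ℂ (Matrix n n ℂ) μ - A)ᵀ := by
    rw [transpose_sub, Matrix.algebraMap_eq_diagonal, diagonal_transpose]
  rw [this, Matrix.isUnit_iff_isUnit_det, det_transpose, ← Matrix.isUnit_iff_isUnit_det]

/-- The distance is invariant under taking time reversals. -/
theorem distance_timeReversal {d : ℕ} (P Pbar : Matrix (Fin d) (Fin d) ℝ)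
    (π πbar : Fin d → ℝ)
    (hP : IsStochastic P) (hPbar : IsStochastic Pbar)
    (hirr : IsIrreducibleMC P) (hirrbar : IsIrreducibleMC Pbar)
    (hstat : IsStationaryDist P π) (hstatbar : IsStationaryDist Pbar πbar) :
    rho (sqrtm (Matrix.hadamard (timeReversal P π) (timeReversal Pbar πbar)))
        = rho (sqrtm (Matrix.hadamard P Pbar))
      ∧ mcDist (timeReversal P π) (timeReversal Pbar πbar) = mcDist P Pbar := by
  set w : Fin d → ℝ := fun i => Real.sqrt (π i * πbar i) with hw
  have hwpos : ∀ i, 0 < w i := fun i =>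
    Real.sqrt_pos.2 (mul_pos (hstat.1 i) (hstatbar.1 i))
  set A : Matrix (Fin d) (Fin d) ℝ := sqrtm (Matrix.hadamard P Pbar) with hA
  -- the real similarity identity
  have key : sqrtm (Matrix.hadamard (timeReversal P π) (timeReversal Pbar πbar))
      = diagonal (fun i => (w i)⁻¹) * Aᵀ * diagonal w := by
    ext i j
    simp only [sqrtm, Matrix.hadamard, timeReversal, of_apply, mul_apply, diagonal_apply,
      transpose_apply]
    rw [Finset.sum_eq_single j (fun b _ hb => by simp [hb]) (by simp)]
    rw [Finset.sum_eq_single i (fun b _ hb => by simp [Ne.symm hb]) (by simp)]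
    simp only [if_pos rfl]
    have h1 : π j * P j i / π i * (πbar j * Pbar j i / πbar i)
        = (π j * πbar j) * (P j i * Pbar j i) / (π i * πbar i) := by ring
    have hn1 : (0:ℝ) ≤ π j * πbar j := by
      exact mul_nonneg (hstat.1 j).le (hstatbar.1 j).le
    have hn2 : (0:ℝ) ≤ (π j * πbar j) * (P j i * Pbar j i) :=
      mul_nonneg hn1 (mul_nonneg (hP.1 j i) (hPbar.1 j i))
    rw [h1, Real.sqrt_div hn2, Real.sqrt_mul hn1, hw]
    simp only [hA, sqrtm, Matrix.hadamard, of_apply]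
    rw [div_eq_mul_inv]
    simp only [if_true]
    ring
  -- transfer to ℂ
  have hρ : rho (sqrtm (Matrix.hadamard (timeReversal P π) (timeReversal Pbar πbar)))
      = rho A := by
    rw [key]
    unfold rho
    congr 1
    unfold spectralRadius
    have hspec : spectrum ℂ
        ((diagonal (fun i => (w i)⁻¹) * Aᵀ * diagonal w).map (algebraMap ℝ ℂ))
        = spectrum ℂ (A.map (algebraMap ℝ ℂ)) := by
      have hmap : (diagonal (fun i => (w i)⁻¹) * Aᵀ * diagonal w).map (algebraMap ℝ ℂ)
          = diagonal (fun i => ((w i : ℂ))⁻¹) * (A.map (algebraMap ℝ ℂ))ᵀ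
            * diagonal (fun i => (w i : ℂ)) := by
        rw [Matrix.map_mul, Matrix.map_mul, transpose_map,
          diagonal_map (map_zero _), diagonal_map (map_zero _)]
        simp [Complex.ofReal_inv]
      -- build the unit
      have hne : ∀ i, (w i : ℂ) ≠ 0 := fun i =>
        Complex.ofReal_ne_zero.2 (hwpos i).ne'
      let u : (Matrix (Fin d) (Fin d) ℂ)ˣ :=
        { val := diagonal (fun i => (w i : ℂ))
          inv := diagonal (fun i => ((w i : ℂ))⁻¹)
          val_inv := by
            rw [diagonal_mul_diagonal]
            convert diagonal_one using 2
            ext i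
            exact mul_inv_cancel₀ (hne i)
          inv_val := by
            rw [diagonal_mul_diagonal]
            convert diagonal_one using 2
            ext i
            exact inv_mul_cancel₀ (hne i) }
      have : diagonal (fun i => ((w i : ℂ))⁻¹) * (A.map (algebraMap ℝ ℂ))ᵀ
            * diagonal (fun i => (w i : ℂ))
          = (↑u⁻¹ : Matrix (Fin d) (Fin d) ℂ) * (A.map (algebraMap ℝ ℂ))ᵀ
            * (↑u : Matrix (Fin d) (Fin d) ℂ) := rfl
      rw [hmap, this, spectrum.units_conjugate', spectrum_transpose']
    rw [hspec]
  exact ⟨hρ, by unfold mcDist; rw [← hA, hρ]⟩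
end

section
/- For all square matrices P, P̄ with nonnegative entries and every k ∈ ℕ, the entrywise inequality (√(P∘P̄))^k(i,j) ≤ (√(P^k ∘ P̄^k))(i,j) holds for all i,j. -/
open Matrix BigOperators Finset

theorem pow_entry_nonneg {n : Type*} [Fintype n] [DecidableEq n]
    (P : Matrix n n ℝ) (hP : ∀ i j, 0 ≤ P i j) (k : ℕ) : ∀ i j, 0 ≤ (P ^ k) i j := by
  induction k with
  | zero => intro i j; simp [Matrix.one_apply]; positivity
  | succ k ih =>
    intro i j
    rw [pow_succ', Matrix.mul_apply]
    exact Finset.sum_nonneg fun l _ => mul_nonneg (hP i l) (ih l j)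

/-- Entrywise inequality `(√(P∘P̄))^k(i,j) ≤ √(P^k ∘ P̄^k)(i,j)` for nonnegative
square matrices. -/
theorem sqrt_hadamard_pow_entrywise_le {n : Type*} [Fintype n] [DecidableEq n]
    (P Pbar : Matrix n n ℝ)
    (hP : ∀ i j, 0 ≤ P i j) (hPbar : ∀ i j, 0 ≤ Pbar i j) (k : ℕ) (i j : n) :
    ((sqrtm (Matrix.hadamard P Pbar)) ^ k) i j
      ≤ (sqrtm (Matrix.hadamard (P ^ k) (Pbar ^ k))) i j := by
  induction k generalizing i j with
  | zero =>
    simp only [pow_zero, sqrtm, Matrix.hadamard, Matrix.of_apply, Matrix.one_apply]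
    by_cases h : i = j <;> simp [h]
  | succ k ih =>
    have hPk := pow_entry_nonneg P hP k
    have hPbk := pow_entry_nonneg Pbar hPbar k
    rw [pow_succ', Matrix.mul_apply]
    simp only [sqrtm, Matrix.hadamard, Matrix.of_apply]
    calc ∑ l, Real.sqrt (P i l * Pbar i l) * ((sqrtm (Matrix.hadamard P Pbar)) ^ k) l j
        ≤ ∑ l, Real.sqrt (P i l * (P ^ k) l j) * Real.sqrt (Pbar i l * (Pbar ^ k) l j) := by
          apply Finset.sum_le_sum
          intro l _
          have h1 : ((sqrtm (Matrix.hadamard P Pbar)) ^ k) l j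
              ≤ Real.sqrt ((P ^ k) l j * (Pbar ^ k) l j) := by
            simpa [sqrtm, Matrix.hadamard] using ih l j
          calc Real.sqrt (P i l * Pbar i l) * ((sqrtm (Matrix.hadamard P Pbar)) ^ k) l j
              ≤ Real.sqrt (P i l * Pbar i l) * Real.sqrt ((P ^ k) l j * (Pbar ^ k) l j) :=
                mul_le_mul_of_nonneg_left h1 (Real.sqrt_nonneg _)
            _ = Real.sqrt (P i l * (P ^ k) l j) * Real.sqrt (Pbar i l * (Pbar ^ k) l j) := by
                rw [← Real.sqrt_mul (mul_nonneg (hP i l) (hPbar i l)),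
                  ← Real.sqrt_mul (mul_nonneg (hP i l) (hPk l j))]
                ring_nf
      _ ≤ Real.sqrt ((P ^ (k + 1)) i j * (Pbar ^ (k + 1)) i j) := by
          have hcs := Finset.sum_sq_le_sum_mul_sum_of_sq_eq_mul (Finset.univ : Finset n)
            (r := fun l => Real.sqrt (P i l * (P ^ k) l j) * Real.sqrt (Pbar i l * (Pbar ^ k) l j))
            (f := fun l => P i l * (P ^ k) l j)
            (g := fun l => Pbar i l * (Pbar ^ k) l j)
            (fun l _ => mul_nonneg (hP i l) (hPk l j))
            (fun l _ => mul_nonneg (hPbar i l) (hPbk l j))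
            (fun l _ => by
              rw [mul_pow, Real.sq_sqrt (mul_nonneg (hP i l) (hPk l j)),
                Real.sq_sqrt (mul_nonneg (hPbar i l) (hPbk l j))])
          have hsum_nonneg : (0:ℝ) ≤ ∑ l, Real.sqrt (P i l * (P ^ k) l j)
              * Real.sqrt (Pbar i l * (Pbar ^ k) l j) :=
            Finset.sum_nonneg fun l _ => mul_nonneg (Real.sqrt_nonneg _) (Real.sqrt_nonneg _)
          rw [pow_succ', pow_succ', Matrix.mul_apply, Matrix.mul_apply,
            Finset.sum_mul_sum]
          rw [Real.le_sqrt hsum_nonneg (Finset.sum_nonneg fun l _ => Finset.sum_nonneg fun m _ =>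
            mul_nonneg (mul_nonneg (hP i l) (hPk l j)) (mul_nonneg (hPbar i m) (hPbk m j)))]
          calc (∑ l, Real.sqrt (P i l * (P ^ k) l j) * Real.sqrt (Pbar i l * (Pbar ^ k) l j)) ^ 2
              ≤ (∑ l, P i l * (P ^ k) l j) * ∑ l, Pbar i l * (Pbar ^ k) l j := hcs
            _ = ∑ l, ∑ m, P i l * (P ^ k) l j * (Pbar i m * (Pbar ^ k) m j) := by
                rw [Finset.sum_mul_sum]
end

section
/- Let P and P̄ be irreducible Markov chains with stationary distributions π, π̄ and multiplicative reversibilizations P† = P*P, P̄† = P̄*P̄, where P* = diag(π)^{-1}Pᵀdiag(π). Then ρ(√(P∘P̄))² ≤ ρ(√(P†∘P̄†)); in particular Distance(P†,P̄†) ≤ 2·Distance(P,P̄). -/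
open Matrix BigOperators Finset

/-- The multiplicative reversibilization `P† = P* P`. -/
noncomputable def multRev {d : ℕ} (P : Matrix (Fin d) (Fin d) ℝ) (π : Fin d → ℝ) :
    Matrix (Fin d) (Fin d) ℝ :=
  timeReversal P π * P

namespace DistAux

variable {n : Type*} [Fintype n] [DecidableEq n]

/-- entrywise: powers preserve nonneg and entrywise order -/
lemma pow_entry_le {A B : Matrix n n ℝ} (hA : ∀ i j, 0 ≤ A i j)
    (hAB : ∀ i j, A i j ≤ B i j) (k : ℕ) :
    (∀ i j, 0 ≤ (A ^ k) i j) ∧ ∀ i j, (A ^ k) i j ≤ (B ^ k) i j := by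
  induction k with
  | zero =>
      refine ⟨fun i j => ?_, fun i j => ?_⟩ <;> simp [Matrix.one_apply]
      positivity
  | succ k ih =>
      constructor
      · intro i j
        rw [pow_succ, Matrix.mul_apply]
        exact Finset.sum_nonneg fun l _ => mul_nonneg (ih.1 i l) (hA l j)
      · intro i j
        rw [pow_succ, pow_succ, Matrix.mul_apply, Matrix.mul_apply]
        refine Finset.sum_le_sum fun l _ => ?_
        exact mul_le_mul (ih.2 i l) (hAB l j) (hA l j) ((ih.1 i l).trans (ih.2 i l))

section Linfty
attribute [local instance] Matrix.linftyOpNormedRing Matrix.linftyOpNormedAlgebra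

variable [Nonempty n]

lemma nnnorm_map_le {A B : Matrix n n ℝ} (hA : ∀ i j, 0 ≤ A i j)
    (hAB : ∀ i j, A i j ≤ B i j) :
    ‖A.map (algebraMap ℝ ℂ)‖₊ ≤ ‖B.map (algebraMap ℝ ℂ)‖₊ := by
  rw [Matrix.linfty_opNNNorm_def, Matrix.linfty_opNNNorm_def]
  refine Finset.sup_mono_fun fun i _ => Finset.sum_le_sum fun j _ => ?_
  simp only [Matrix.map_apply]
  rw [← NNReal.coe_le_coe]
  simp only [coe_nnnorm]
  rw [show (algebraMap ℝ ℂ) (A i j) = ((A i j : ℝ) : ℂ) from rfl,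
      show (algebraMap ℝ ℂ) (B i j) = ((B i j : ℝ) : ℂ) from rfl,
      Complex.norm_real, Complex.norm_real, Real.norm_eq_abs, Real.norm_eq_abs,
      abs_of_nonneg (hA i j), abs_of_nonneg ((hA i j).trans (hAB i j))]
  exact hAB i j

lemma sr_mono {A B : Matrix n n ℝ} (hA : ∀ i j, 0 ≤ A i j)
    (hAB : ∀ i j, A i j ≤ B i j) :
    spectralRadius ℂ (A.map (algebraMap ℝ ℂ))
      ≤ spectralRadius ℂ (B.map (algebraMap ℝ ℂ)) := by
  refine le_of_tendsto_of_tendsto'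
    (spectrum.pow_nnnorm_pow_one_div_tendsto_nhds_spectralRadius (A.map (algebraMap ℝ ℂ)))
    (spectrum.pow_nnnorm_pow_one_div_tendsto_nhds_spectralRadius (B.map (algebraMap ℝ ℂ)))
    (fun k => ?_)
  have hpk := pow_entry_le hA hAB k
  have h1 : (A.map (algebraMap ℝ ℂ)) ^ k = (A ^ k).map (algebraMap ℝ ℂ) :=
    ((algebraMap ℝ ℂ).mapMatrix.map_pow A k).symm
  have h2 : (B.map (algebraMap ℝ ℂ)) ^ k = (B ^ k).map (algebraMap ℝ ℂ) :=
    ((algebraMap ℝ ℂ).mapMatrix.map_pow B k).symm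
  rw [h1, h2]
  exact ENNReal.rpow_le_rpow (by exact_mod_cast nnnorm_map_le hpk.1 hpk.2)
    (by positivity)

lemma sr_ne_top (A : Matrix n n ℝ) :
    spectralRadius ℂ (A.map (algebraMap ℝ ℂ)) ≠ ⊤ :=
  ((spectrum.spectralRadius_le_nnnorm (𝕜 := ℂ) (A.map (algebraMap ℝ ℂ))).trans_lt
    ENNReal.coe_lt_top).ne

lemma sr_le_one {A : Matrix n n ℝ} (hA : ∀ i j, 0 ≤ A i j)
    (hrow : ∀ i, ∑ j, A i j ≤ 1) :
    spectralRadius ℂ (A.map (algebraMap ℝ ℂ)) ≤ 1 := by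
  refine (spectrum.spectralRadius_le_nnnorm (𝕜 := ℂ) _).trans ?_
  rw [show (1 : ENNReal) = ((1 : NNReal) : ENNReal) from rfl, ENNReal.coe_le_coe,
    Matrix.linfty_opNNNorm_def]
  refine Finset.sup_le fun i _ => ?_
  rw [← NNReal.coe_le_coe]
  push_cast
  calc ∑ j, ‖(A.map (algebraMap ℝ ℂ)) i j‖
      = ∑ j, A i j := by
        refine Finset.sum_congr rfl fun j _ => ?_
        simp only [Matrix.map_apply]
        rw [show (algebraMap ℝ ℂ) (A i j) = ((A i j : ℝ) : ℂ) from rfl,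
          Complex.norm_real, Real.norm_eq_abs, abs_of_nonneg (hA i j)]
    _ ≤ 1 := hrow i

end Linfty

section L2
open scoped Matrix.Norms.L2Operator

variable [Nonempty n]

noncomputable local instance : CStarAlgebra (Matrix n n ℂ) :=
  { Matrix.instL2OpNormedRing, (inferInstance : StarRing (Matrix n n ℂ)),
    Matrix.instCStarRing, Matrix.instL2OpNormedAlgebra,
    (inferInstance : StarModule ℂ (Matrix n n ℂ)),
    (inferInstance : CompleteSpace (Matrix n n ℂ)) with }

lemma sr_sq_le (B : Matrix n n ℝ) :
    spectralRadius ℂ (B.map (algebraMap ℝ ℂ)) ^ 2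
      ≤ spectralRadius ℂ ((Bᵀ * B).map (algebraMap ℝ ℂ)) := by
  set b := B.map (algebraMap ℝ ℂ) with hb
  have hstar : (Bᵀ * B).map (algebraMap ℝ ℂ) = star b * b := by
    rw [Matrix.map_mul]
    congr 1
    ext i j
    simp [hb, Matrix.conjTranspose_apply, Matrix.map_apply,
      show ∀ x : ℝ, (algebraMap ℝ ℂ) x = (x : ℂ) from fun _ => rfl]
  rw [hstar, (IsSelfAdjoint.star_mul_self b).spectralRadius_eq_nnnorm,
    CStarRing.nnnorm_star_mul_self]
  push_cast
  have := spectrum.spectralRadius_le_nnnorm (𝕜 := ℂ) b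
  calc spectralRadius ℂ b ^ 2 ≤ (‖b‖₊ : ENNReal) ^ 2 := by
        exact pow_le_pow_left' this 2
    _ = (‖b‖₊ : ENNReal) * ‖b‖₊ := sq (‖b‖₊ : ENNReal) ▸ by ring
  
end L2

/-- similarity invariance -/
lemma sr_conj (e : n → ℝ) (he : ∀ i, e i ≠ 0) (X Y : Matrix n n ℝ)
    (h : X = diagonal (fun i => (e i)⁻¹) * Y * diagonal e) :
    spectralRadius ℂ (X.map (algebraMap ℝ ℂ))
      = spectralRadius ℂ (Y.map (algebraMap ℝ ℂ)) := by
  have hc : ∀ x : ℝ, (algebraMap ℝ ℂ) x = (x : ℂ) := fun _ => rfl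
  set u : (Matrix n n ℂ)ˣ :=
    { val := diagonal fun i => (e i : ℂ)
      inv := diagonal fun i => ((e i : ℂ))⁻¹
      val_inv := by
        rw [Matrix.diagonal_mul_diagonal]
        convert Matrix.diagonal_one
        exact mul_inv_cancel₀ (by exact_mod_cast he _)
      inv_val := by
        rw [Matrix.diagonal_mul_diagonal]
        convert Matrix.diagonal_one
        exact inv_mul_cancel₀ (by exact_mod_cast he _) } with hu
  have hinv : (↑u⁻¹ : Matrix n n ℂ) = diagonal fun i => ((e i : ℂ))⁻¹ := rfl
  have hval : (↑u : Matrix n n ℂ) = diagonal fun i => (e i : ℂ) := rfl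
  have hX : X.map (algebraMap ℝ ℂ)
      = (↑(u⁻¹) : Matrix n n ℂ) * Y.map (algebraMap ℝ ℂ) * (↑u : Matrix n n ℂ) := by
    have h1 : (fun m => (algebraMap ℝ ℂ) ((e m)⁻¹)) = fun i => ((e i : ℂ))⁻¹ := by
      funext i; simp [hc]
    have h2 : (fun m => (algebraMap ℝ ℂ) (e m)) = fun i => ((e i) : ℂ) := by
      funext i; simp [hc]
    rw [h, Matrix.map_mul, Matrix.map_mul,
      Matrix.diagonal_map (map_zero _), Matrix.diagonal_map (map_zero _),
      hinv, hval, h1, h2]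
  have hspec : spectrum ℂ (X.map (algebraMap ℝ ℂ)) = spectrum ℂ (Y.map (algebraMap ℝ ℂ)) := by
    rw [hX]
    exact spectrum.units_conjugate'
  unfold spectralRadius
  rw [hspec]

end DistAux

/-- `ρ(√(P∘P̄))² ≤ ρ(√(P†∘P̄†))`, hence
`Distance(P†,P̄†) ≤ 2·Distance(P,P̄)`. -/
theorem distance_multRev {d : ℕ} (P Pbar : Matrix (Fin d) (Fin d) ℝ)
    (π πbar : Fin d → ℝ)
    (hP : IsStochastic P) (hPbar : IsStochastic Pbar)
    (hirr : IsIrreducibleMC P) (hirrbar : IsIrreducibleMC Pbar)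
    (hstat : IsStationaryMC P π) (hstatbar : IsStationaryMC Pbar πbar) :
    rho (sqrtm (Matrix.hadamard P Pbar)) ^ 2
        ≤ rho (sqrtm (Matrix.hadamard (multRev P π) (multRev Pbar πbar)))
      ∧ mcDist (multRev P π) (multRev Pbar πbar) ≤ 2 * mcDist P Pbar := by
  obtain ⟨hπpos, hπsum, hπstat⟩ := hstat
  obtain ⟨hbpos, hbsum, hbstat⟩ := hstatbar
  have hd : d ≠ 0 := by rintro rfl; simpa using hπsum
  haveI : Nonempty (Fin d) := ⟨⟨0, Nat.pos_of_ne_zero hd⟩⟩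
  set M := sqrtm (Matrix.hadamard P Pbar) with hM
  set N := sqrtm (Matrix.hadamard (timeReversal P π) (timeReversal Pbar πbar)) with hN
  set S := sqrtm (Matrix.hadamard (multRev P π) (multRev Pbar πbar)) with hS
  have hM0 : ∀ i j, 0 ≤ M i j := fun i j => Real.sqrt_nonneg _
  have hN0 : ∀ i j, 0 ≤ N i j := fun i j => Real.sqrt_nonneg _
  set s : Fin d → ℝ := fun i => Real.sqrt (π i * πbar i) with hs
  set e : Fin d → ℝ := fun i => Real.sqrt (s i) with he
  have hspos : ∀ i, 0 < s i := fun i => Real.sqrt_pos.2 (mul_pos (hπpos i) (hbpos i))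
  have hepos : ∀ i, 0 < e i := fun i => Real.sqrt_pos.2 (hspos i)
  have hesq : ∀ i, e i ^ 2 = s i := fun i => Real.sq_sqrt (hspos i).le
  set B : Matrix (Fin d) (Fin d) ℝ :=
    diagonal e * M * diagonal (fun i => (e i)⁻¹) with hB
  have hBapp : ∀ i j, B i j = e i * M i j * (e j)⁻¹ := by
    intro i j
    rw [hB, Matrix.mul_diagonal, Matrix.diagonal_mul]
  have hNapp : ∀ i k, N i k = s k * M k i / s i := by
    intro i k
    have h1 : N i k = Real.sqrt ((π k * P k i / π i) * (πbar k * Pbar k i / πbar i)) := rfl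
    have h2 : (π k * P k i / π i) * (πbar k * Pbar k i / πbar i)
        = ((π k * πbar k) * (P k i * Pbar k i)) / (π i * πbar i) := by
      field_simp
    rw [h1, h2,
      Real.sqrt_div (mul_nonneg (mul_nonneg (hπpos k).le (hbpos k).le)
        (mul_nonneg (hP.1 k i) (hPbar.1 k i))),
      Real.sqrt_mul (mul_nonneg (hπpos k).le (hbpos k).le)]
    rfl
  -- similarity identities
  have hMB : M = diagonal (fun i => (e i)⁻¹) * B * diagonal e := by
    ext i j
    rw [Matrix.mul_diagonal, Matrix.diagonal_mul, hBapp i j]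
    have hei := (hepos i).ne'
    have hej := (hepos j).ne'
    field_simp
  have hNMB : N * M = diagonal (fun i => (e i)⁻¹) * (Bᵀ * B) * diagonal e := by
    ext i j
    have hRHS : (diagonal (fun i => (e i)⁻¹) * (Bᵀ * B) * diagonal e) i j
        = ∑ k, ((e i)⁻¹ * (B k i * B k j)) * e j := by
      rw [Matrix.mul_diagonal, Matrix.diagonal_mul, Matrix.mul_apply, Finset.mul_sum,
        Finset.sum_mul]
      exact Finset.sum_congr rfl fun k _ => by rw [Matrix.transpose_apply]
    rw [Matrix.mul_apply, hRHS]
    refine Finset.sum_congr rfl fun k _ => ?_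
    rw [hNapp i k, hBapp k i, hBapp k j, ← hesq i, ← hesq k]
    have hei := (hepos i).ne'
    have hek := (hepos k).ne'
    have hej := (hepos j).ne'
    field_simp
  -- Cauchy–Schwarz entrywise bound
  have htr0 : ∀ a b, 0 ≤ (timeReversal P π) a b := fun a b =>
    div_nonneg (mul_nonneg (hπpos b).le (hP.1 b a)) (hπpos a).le
  have htr0' : ∀ a b, 0 ≤ (timeReversal Pbar πbar) a b := fun a b =>
    div_nonneg (mul_nonneg (hbpos b).le (hPbar.1 b a)) (hbpos a).le
  have key4 : ∀ a b c' d' : ℝ, 0 ≤ a → 0 ≤ b → 0 ≤ c' →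
      Real.sqrt (a*b) * Real.sqrt (c'*d') = Real.sqrt (a*c') * Real.sqrt (b*d') := by
    intro a b c' d' ha hb hc
    rw [Real.sqrt_mul ha b, Real.sqrt_mul hc d', Real.sqrt_mul ha c', Real.sqrt_mul hb d']
    ring
  have hNM_le : ∀ i j, (N * M) i j ≤ S i j := by
    intro i j
    rw [Matrix.mul_apply]
    have hf0 : ∀ k : Fin d, 0 ≤ (timeReversal P π) i k * P k j := fun k =>
      mul_nonneg (htr0 i k) (hP.1 k j)
    have hg0 : ∀ k : Fin d, 0 ≤ (timeReversal Pbar πbar) i k * Pbar k j := fun k =>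
      mul_nonneg (htr0' i k) (hPbar.1 k j)
    calc ∑ k, N i k * M k j
        = ∑ k, Real.sqrt ((timeReversal P π) i k * P k j)
            * Real.sqrt ((timeReversal Pbar πbar) i k * Pbar k j) := by
          refine Finset.sum_congr rfl fun k _ => ?_
          exact key4 _ _ _ _ (htr0 i k) (htr0' i k) (hP.1 k j)
      _ ≤ Real.sqrt (∑ k, (timeReversal P π) i k * P k j)
            * Real.sqrt (∑ k, (timeReversal Pbar πbar) i k * Pbar k j) :=
          Real.sum_sqrt_mul_sqrt_le _ hf0 hg0
      _ = S i j := by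
          rw [← Matrix.mul_apply, ← Matrix.mul_apply,
            ← Real.sqrt_mul
              (by rw [Matrix.mul_apply]; exact Finset.sum_nonneg fun k _ => hf0 k)]
          rfl
  have hNM0 : ∀ i j, 0 ≤ (N * M) i j := by
    intro i j
    rw [Matrix.mul_apply]
    exact Finset.sum_nonneg fun k _ => mul_nonneg (hN0 i k) (hM0 k j)
  have hene : ∀ i, e i ≠ 0 := fun i => (hepos i).ne'
  -- the spectral chain
  have key : spectralRadius ℂ (M.map (algebraMap ℝ ℂ)) ^ 2
      ≤ spectralRadius ℂ (S.map (algebraMap ℝ ℂ)) :=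
    calc spectralRadius ℂ (M.map (algebraMap ℝ ℂ)) ^ 2
        = spectralRadius ℂ (B.map (algebraMap ℝ ℂ)) ^ 2 := by
          rw [DistAux.sr_conj e hene M B hMB]
      _ ≤ spectralRadius ℂ ((Bᵀ * B).map (algebraMap ℝ ℂ)) := DistAux.sr_sq_le B
      _ = spectralRadius ℂ ((N * M).map (algebraMap ℝ ℂ)) :=
          (DistAux.sr_conj e hene (N * M) (Bᵀ * B) hNMB).symm
      _ ≤ spectralRadius ℂ (S.map (algebraMap ℝ ℂ)) := DistAux.sr_mono hNM0 hNM_le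
  have h1 : rho M ^ 2 ≤ rho S := by
    calc rho M ^ 2 = ((spectralRadius ℂ (M.map (algebraMap ℝ ℂ))) ^ 2).toReal :=
          (ENNReal.toReal_pow _ _).symm
      _ ≤ (spectralRadius ℂ (S.map (algebraMap ℝ ℂ))).toReal :=
          ENNReal.toReal_mono (DistAux.sr_ne_top S) key
      _ = rho S := rfl
  refine ⟨h1, ?_⟩
  -- rho M ≤ 1
  have hrow : ∀ i, ∑ j, M i j ≤ 1 := by
    intro i
    calc ∑ j, M i j = ∑ j, Real.sqrt (P i j) * Real.sqrt (Pbar i j) := by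
          refine Finset.sum_congr rfl fun j _ => ?_
          exact Real.sqrt_mul (hP.1 i j) _
      _ ≤ Real.sqrt (∑ j, P i j) * Real.sqrt (∑ j, Pbar i j) :=
          Real.sum_sqrt_mul_sqrt_le _ (hP.1 i) (hPbar.1 i)
      _ = 1 := by rw [hP.2 i, hPbar.2 i]; simp
  have hle1 : rho M ≤ 1 := by
    have h := ENNReal.toReal_mono (by simp) (DistAux.sr_le_one hM0 hrow)
    simpa [rho] using h
  have h0 : 0 ≤ rho M := ENNReal.toReal_nonneg
  simp only [mcDist]
  nlinarith [h1, hle1, h0]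
end

section
/- Let P, P̄ be reversible irreducible Markov chains on [d] with stationary distributions π, π̄ satisfying max_i |π(i)/π̄(i) - 1| ≤ ε for some ε ∈ [0,1). For α ∈ [0,1] let P(α) = αP + (1-α)P̄. Then ρ(√(P ∘ P(α))) ≤ √α + √(1-α) · ((1+ε)/(1-ε))^{1/4} · ρ(√(P∘P̄)). In particular, Distance(P, P(α)) ≥ 1 - √α - 2√((1-α)/(1-ε)) + 2√((1-α)/(1-ε))·Distance(P,P̄). -/
open Matrix BigOperators Finset

section linfty
attribute [local instance] Matrix.linftyOpNormedRing Matrix.linftyOpNormedAlgebra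

lemma rho_le_one_of_stochastic {d : ℕ} [NeZero d] {P : Matrix (Fin d) (Fin d) ℝ}
    (h1 : ∀ i j, 0 ≤ P i j) (h2 : ∀ i, ∑ j, P i j = 1) :
    spectralRadius ℂ (P.map (algebraMap ℝ ℂ)) ≤ 1 := by
  refine le_trans (spectrum.spectralRadius_le_nnnorm _) ?_
  rw [show (1 : ENNReal) = ((1 : NNReal) : ENNReal) from rfl, ENNReal.coe_le_coe,
    Matrix.linfty_opNNNorm_def]
  refine Finset.sup_le fun i _ => ?_
  have : ∀ j, ‖(P.map (algebraMap ℝ ℂ)) i j‖₊ = ‖P i j‖₊ := by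
    intro j
    simp [Matrix.map_apply, Complex.nnnorm_real]
  rw [Finset.sum_congr rfl fun j _ => this j]
  have heq : ∀ j : Fin d, ‖P i j‖₊ = (P i j).toNNReal := fun j =>
    by simp [Real.nnnorm_of_nonneg (h1 i j), Real.toNNReal_of_nonneg (h1 i j)]
  rw [Finset.sum_congr rfl fun j _ => heq j,
    ← Real.toNNReal_sum_of_nonneg fun j _ => h1 i j, h2 i]
  simp

end linfty
open scoped Matrix.Norms.L2Operator

variable {d : ℕ}

section l2
variable {d : ℕ}


variable {d : ℕ}

lemma euclid_norm_eq (v : EuclideanSpace ℂ (Fin d)) :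
    ‖v‖ = Real.sqrt (∑ i, ‖v i‖ ^ 2) := by
  rw [EuclideanSpace.norm_eq]

lemma clm_apply_eq (X : Matrix (Fin d) (Fin d) ℂ) (v : EuclideanSpace ℂ (Fin d)) (i : Fin d) :
    (Matrix.toEuclideanCLM (𝕜 := ℂ) X v) i = ∑ j, X i j * v j := by
  have h := Matrix.ofLp_toEuclideanCLM (𝕜 := ℂ) X v
  have : (Matrix.toEuclideanCLM (𝕜 := ℂ) X v) i
      = (WithLp.ofLp (Matrix.toEuclideanCLM (𝕜 := ℂ) X v)) i := rfl
  rw [this, h]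
  simp [Matrix.toLin'_apply, Matrix.mulVec, dotProduct]

lemma l2_opNorm_mono {X Y : Matrix (Fin d) (Fin d) ℝ}
    (hX : ∀ i j, 0 ≤ X i j) (hXY : ∀ i j, X i j ≤ Y i j) :
    ‖X.map (algebraMap ℝ ℂ)‖ ≤ ‖Y.map (algebraMap ℝ ℂ)‖ := by
  set Xc := X.map (algebraMap ℝ ℂ)
  set Yc := Y.map (algebraMap ℝ ℂ)
  rw [Matrix.cstar_norm_def, Matrix.cstar_norm_def]
  refine ContinuousLinearMap.opNorm_le_bound _ (norm_nonneg _) fun v => ?_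
  set w : EuclideanSpace ℂ (Fin d) := WithLp.toLp 2 (fun j => (‖v j‖ : ℂ)) with hw
  have hwv : ‖w‖ = ‖v‖ := by
    rw [euclid_norm_eq, euclid_norm_eq]
    congr 1
    refine Finset.sum_congr rfl fun j _ => ?_
    simp [hw]
  have key : ∀ i, ‖(Matrix.toEuclideanCLM (𝕜 := ℂ) Xc v) i‖
      ≤ ‖(Matrix.toEuclideanCLM (𝕜 := ℂ) Yc w) i‖ := by
    intro i
    rw [clm_apply_eq, clm_apply_eq]
    have h1 : ‖∑ j, Xc i j * v j‖ ≤ ∑ j, X i j * ‖v j‖ := by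
      refine le_trans (norm_sum_le _ _) (le_of_eq (Finset.sum_congr rfl fun j _ => ?_))
      simp [Xc, Matrix.map_apply, norm_mul, Complex.norm_real,
        abs_of_nonneg (hX i j)]
    have h2 : ∑ j, X i j * ‖v j‖ ≤ ∑ j, Y i j * ‖v j‖ :=
      Finset.sum_le_sum fun j _ => mul_le_mul_of_nonneg_right (hXY i j) (norm_nonneg _)
    have h3 : ‖∑ j, Yc i j * w j‖ = ∑ j, Y i j * ‖v j‖ := by
      have : ∑ j, Yc i j * w j = ((∑ j, Y i j * ‖v j‖ : ℝ) : ℂ) := by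
        push_cast
        refine Finset.sum_congr rfl fun j _ => ?_
        simp [Yc, Matrix.map_apply, hw]
      rw [this, Complex.norm_real, Real.norm_of_nonneg]
      exact Finset.sum_nonneg fun j _ => mul_nonneg (le_trans (hX i j) (hXY i j)) (norm_nonneg _)
    calc ‖∑ j, Xc i j * v j‖ ≤ ∑ j, Y i j * ‖v j‖ := le_trans h1 h2
    _ = ‖∑ j, Yc i j * w j‖ := h3.symm
  have hnorm : ‖Matrix.toEuclideanCLM (𝕜 := ℂ) Xc v‖ ≤ ‖Matrix.toEuclideanCLM (𝕜 := ℂ) Yc w‖ := by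
    rw [euclid_norm_eq, euclid_norm_eq]
    refine Real.sqrt_le_sqrt (Finset.sum_le_sum fun i _ => ?_)
    exact pow_le_pow_left₀ (norm_nonneg _) (key i) 2
  calc ‖Matrix.toEuclideanCLM (𝕜 := ℂ) Xc v‖ ≤ ‖Matrix.toEuclideanCLM (𝕜 := ℂ) Yc w‖ := hnorm
  _ ≤ ‖Matrix.toEuclideanCLM (𝕜 := ℂ) Yc‖ * ‖w‖ := ContinuousLinearMap.le_opNorm _ _
  _ = ‖Matrix.toEuclideanCLM (𝕜 := ℂ) Yc‖ * ‖v‖ := by rw [hwv]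

end l2

noncomputable instance mcstar : CStarAlgebra (Matrix (Fin d) (Fin d) ℂ) := { }

lemma l2_norm_one [NeZero d] : ‖(1 : Matrix (Fin d) (Fin d) ℂ)‖ = 1 := by
  rw [Matrix.cstar_norm_def, _root_.map_one, ContinuousLinearMap.one_def]
  exact ContinuousLinearMap.norm_id

example [NeZero d] : NormOneClass (Matrix (Fin d) (Fin d) ℂ) := ⟨l2_norm_one⟩

noncomputable def dconj (f : Fin d → ℝ) (X : Matrix (Fin d) (Fin d) ℝ) :
    Matrix (Fin d) (Fin d) ℝ :=
  Matrix.of fun i j => f i * X i j * (f j)⁻¹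

noncomputable def dunit (f : Fin d → ℝ) (hf : ∀ i, 0 < f i) :
    (Matrix (Fin d) (Fin d) ℂ)ˣ where
  val := Matrix.diagonal fun i => (f i : ℂ)
  inv := Matrix.diagonal fun i => ((f i : ℝ) : ℂ)⁻¹
  val_inv := by
    rw [Matrix.diagonal_mul_diagonal, ← Matrix.diagonal_one]
    rw [show (fun i => (f i : ℂ) * ((f i : ℂ))⁻¹) = fun _ => (1:ℂ) from
      funext fun i => mul_inv_cancel₀ (Complex.ofReal_ne_zero.mpr (hf i).ne')]
  inv_val := by
    rw [Matrix.diagonal_mul_diagonal, ← Matrix.diagonal_one]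
    rw [show (fun i => ((f i : ℂ))⁻¹ * (f i : ℂ)) = fun _ => (1:ℂ) from
      funext fun i => inv_mul_cancel₀ (Complex.ofReal_ne_zero.mpr (hf i).ne')]

lemma map_dconj (f : Fin d → ℝ) (hf : ∀ i, 0 < f i) (X : Matrix (Fin d) (Fin d) ℝ) :
    (dconj f X).map (algebraMap ℝ ℂ)
      = (dunit f hf : Matrix (Fin d) (Fin d) ℂ) * X.map (algebraMap ℝ ℂ)
          * ((dunit f hf)⁻¹ : (Matrix (Fin d) (Fin d) ℂ)ˣ) := by
  have h1 : ((dunit f hf)⁻¹ : (Matrix (Fin d) (Fin d) ℂ)ˣ)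
      = (Matrix.diagonal fun i => ((f i : ℝ) : ℂ)⁻¹ : Matrix (Fin d) (Fin d) ℂ) := rfl
  rw [h1]
  show _ = (Matrix.diagonal fun i => (f i : ℂ)) * _ * _
  ext i j
  simp only [dconj, Matrix.map_apply, Matrix.of_apply, Matrix.mul_diagonal,
    Matrix.diagonal_mul, Complex.coe_algebraMap]
  push_cast
  ring

lemma spectralRadius_dconj (f : Fin d → ℝ) (hf : ∀ i, 0 < f i)
    (X : Matrix (Fin d) (Fin d) ℝ) :
    spectralRadius ℂ ((dconj f X).map (algebraMap ℝ ℂ))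
      = spectralRadius ℂ (X.map (algebraMap ℝ ℂ)) := by
  unfold spectralRadius
  rw [map_dconj f hf X, spectrum.units_conjugate]

lemma dconj_dconj (f g : Fin d → ℝ) (X : Matrix (Fin d) (Fin d) ℝ) :
    dconj (fun i => f i * g i) X = dconj f (dconj g X) := by
  ext i j
  simp only [dconj, Matrix.of_apply, mul_inv]
  ring

lemma isSelfAdjoint_map_of_symm (X : Matrix (Fin d) (Fin d) ℝ)
    (hsymm : ∀ i j, X i j = X j i) : IsSelfAdjoint (X.map (algebraMap ℝ ℂ)) := by
  show star _ = _
  ext i j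
  simp only [Matrix.star_apply, Matrix.map_apply]
  rw [hsymm i j]
  simp [Complex.star_def, Complex.conj_ofReal]

lemma rho_eq_norm_of_symm (X : Matrix (Fin d) (Fin d) ℝ)
    (hsymm : ∀ i j, X i j = X j i) :
    (spectralRadius ℂ (X.map (algebraMap ℝ ℂ))).toReal = ‖X.map (algebraMap ℝ ℂ)‖ :=
  (isSelfAdjoint_map_of_symm X hsymm).toReal_spectralRadius_complex_eq_norm

lemma toReal_spectralRadius_le_norm [NeZero d] (Y : Matrix (Fin d) (Fin d) ℂ) :
    (spectralRadius ℂ Y).toReal ≤ ‖Y‖ := by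
  letI : NormOneClass (Matrix (Fin d) (Fin d) ℂ) := ⟨l2_norm_one⟩
  have h := spectrum.spectralRadius_le_nnnorm (𝕜 := ℂ) Y
  have := ENNReal.toReal_mono ENNReal.coe_ne_top h
  simpa using this

lemma l2_norm_diagonal_le [NeZero d] (f : Fin d → ℝ) (m : ℝ)
    (h0 : ∀ i, 0 ≤ f i) (hm : ∀ i, f i ≤ m) :
    ‖(Matrix.diagonal f).map (algebraMap ℝ ℂ)‖ ≤ m := by
  have hmono := l2_opNorm_mono (X := Matrix.diagonal f)
    (Y := m • (1 : Matrix (Fin d) (Fin d) ℝ)) ?_ ?_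
  · refine le_trans hmono (le_of_eq ?_)
    have : (m • (1 : Matrix (Fin d) (Fin d) ℝ)).map (algebraMap ℝ ℂ)
        = (m : ℂ) • (1 : Matrix (Fin d) (Fin d) ℂ) := by
      ext i j
      by_cases h : i = j <;>
        simp [Matrix.map_apply, Matrix.smul_apply, Matrix.one_apply, h]
    rw [this, norm_smul, l2_norm_one, Complex.norm_real, Real.norm_of_nonneg
      (le_trans (h0 (Classical.arbitrary _)) (hm _)), mul_one]
  · intro i j
    by_cases h : i = j <;> simp [Matrix.diagonal_apply, h, h0]
  · intro i j
    by_cases h : i = j <;>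
      simp [Matrix.diagonal_apply, Matrix.smul_apply, Matrix.one_apply, h, hm, h0]
lemma sqrt_add_le' {x y : ℝ} (hx : 0 ≤ x) (hy : 0 ≤ y) :
    Real.sqrt (x + y) ≤ Real.sqrt x + Real.sqrt y := by
  have key : x + y ≤ (Real.sqrt x + Real.sqrt y) ^ 2 := by
    nlinarith [Real.sq_sqrt hx, Real.sq_sqrt hy, Real.sqrt_nonneg x, Real.sqrt_nonneg y,
      mul_nonneg (Real.sqrt_nonneg x) (Real.sqrt_nonneg y)]
  calc Real.sqrt (x + y) ≤ Real.sqrt ((Real.sqrt x + Real.sqrt y) ^ 2) := Real.sqrt_le_sqrt key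
  _ = Real.sqrt x + Real.sqrt y := Real.sqrt_sq (by positivity)


open scoped Matrix.Norms.L2Operator in
/-- Distance to a convex combination `P(α) = αP + (1-α)P̄`, when the stationary
distributions are multiplicatively `ε`-close. -/
theorem distance_convex_combination {d : ℕ} (P Pbar : Matrix (Fin d) (Fin d) ℝ)
    (π πbar : Fin d → ℝ)
    (hP : IsStochastic P) (hPbar : IsStochastic Pbar)
    (hirr : IsIrreducibleMC P) (hirrbar : IsIrreducibleMC Pbar)
    (hstat : IsStationaryMC P π) (hstatbar : IsStationaryMC Pbar πbar)
    (hrev : IsReversible P π) (hrevbar : IsReversible Pbar πbar)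
    (ε : ℝ) (hε : ε ∈ Set.Ico (0 : ℝ) 1)
    (hclose : ∀ i, |π i / πbar i - 1| ≤ ε)
    (α : ℝ) (hα : α ∈ Set.Icc (0 : ℝ) 1) :
    rho (sqrtm (Matrix.hadamard P (α • P + (1 - α) • Pbar)))
        ≤ Real.sqrt α
          + Real.sqrt (1 - α) * ((1 + ε) / (1 - ε)) ^ ((1 : ℝ) / 4)
            * rho (sqrtm (Matrix.hadamard P Pbar))
      ∧ 1 - Real.sqrt α - 2 * Real.sqrt ((1 - α) / (1 - ε))
          + 2 * Real.sqrt ((1 - α) / (1 - ε)) * mcDist P Pbar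
        ≤ mcDist P (α • P + (1 - α) • Pbar) := by
  obtain ⟨hε0, hε1⟩ := hε
  obtain ⟨hα0, hα1⟩ := hα
  have h1ε : (0:ℝ) < 1 - ε := by linarith
  have h1a : (0:ℝ) ≤ 1 - α := by linarith
  haveI hdn : NeZero d := by
    constructor
    intro h
    subst h
    simpa using hstat.2.1
  have hπ : ∀ i, 0 < π i := hstat.1
  have hπb : ∀ i, 0 < πbar i := hstatbar.1
  have hub : ∀ i, π i / πbar i ≤ 1 + ε := fun i => by
    have := (abs_le.mp (hclose i)).2; linarith
  have hlb : ∀ i, 1 - ε ≤ π i / πbar i := fun i => by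
    have := (abs_le.mp (hclose i)).1; linarith
  have hinvb : ∀ i, πbar i / π i ≤ (1 - ε)⁻¹ := fun i => by
    have hpos : 0 < π i / πbar i := div_pos (hπ i) (hπb i)
    calc πbar i / π i = (π i / πbar i)⁻¹ := by rw [inv_div]
    _ ≤ (1 - ε)⁻¹ := by
        apply inv_anti₀ h1ε (hlb i)
  -- matrices
  set Q : Matrix (Fin d) (Fin d) ℝ := α • P + (1 - α) • Pbar with hQdef
  set M : Matrix (Fin d) (Fin d) ℝ := sqrtm (Matrix.hadamard P Pbar) with hMdef
  set A : Matrix (Fin d) (Fin d) ℝ := sqrtm (Matrix.hadamard P Q) with hAdef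
  have hMel : ∀ i j, M i j = Real.sqrt (P i j * Pbar i j) := fun i j => rfl
  have hAel : ∀ i j, A i j = Real.sqrt (P i j * Q i j) := fun i j => rfl
  have hMnn : ∀ i j, 0 ≤ M i j := fun i j => Real.sqrt_nonneg _
  have hAnn : ∀ i j, 0 ≤ A i j := fun i j => Real.sqrt_nonneg _
  have hQel : ∀ i j, Q i j = α * P i j + (1 - α) * Pbar i j := fun i j => by
    simp [hQdef, Matrix.add_apply, Matrix.smul_apply, smul_eq_mul]
  set B : Matrix (Fin d) (Fin d) ℝ := Real.sqrt α • P + Real.sqrt (1 - α) • M with hBdef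
  have hBel : ∀ i j, B i j = Real.sqrt α * P i j + Real.sqrt (1 - α) * M i j := fun i j => by
    simp [hBdef, Matrix.add_apply, Matrix.smul_apply, smul_eq_mul]
  have hAB : ∀ i j, A i j ≤ B i j := by
    intro i j
    rw [hAel, hBel]
    have hsplit : P i j * Q i j = α * P i j ^ 2 + (1 - α) * (P i j * Pbar i j) := by
      rw [hQel]; ring
    rw [hsplit]
    refine le_trans (sqrt_add_le' (by positivity) ?_) ?_
    · exact mul_nonneg h1a (mul_nonneg (hP.1 i j) (hPbar.1 i j))
    · rw [Real.sqrt_mul hα0, Real.sqrt_mul h1a, Real.sqrt_sq (hP.1 i j), hMel]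
  -- diagonal weights
  set c : Fin d → ℝ := fun i => Real.sqrt (π i) with hcdef
  set e : Fin d → ℝ := fun i => (π i * πbar i) ^ ((1:ℝ)/4) with hedef
  set g : Fin d → ℝ := fun i => (π i / πbar i) ^ ((1:ℝ)/4) with hgdef
  have hc : ∀ i, 0 < c i := fun i => Real.sqrt_pos.mpr (hπ i)
  have he : ∀ i, 0 < e i := fun i => Real.rpow_pos_of_pos (mul_pos (hπ i) (hπb i)) _
  have hg : ∀ i, 0 < g i := fun i => Real.rpow_pos_of_pos (div_pos (hπ i) (hπb i)) _
  have hce : c = fun i => g i * e i := by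
    funext i
    rw [hgdef, hedef, hcdef]
    rw [← Real.mul_rpow (div_pos (hπ i) (hπb i)).le (mul_pos (hπ i) (hπb i)).le]
    have hmm : π i / πbar i * (π i * πbar i) = π i ^ 2 := by
      have h0 : π i / πbar i * (π i * πbar i) = π i * π i * (πbar i * (πbar i)⁻¹) := by
        ring
      rw [h0, mul_inv_cancel₀ (hπb i).ne', mul_one]
      ring
    rw [hmm, ← Real.rpow_natCast (π i) 2, ← Real.rpow_mul (hπ i).le]
    show Real.sqrt (π i) = _
    rw [Real.sqrt_eq_rpow]
    norm_num
  have hc2 : ∀ i, c i * c i = π i := fun i => Real.mul_self_sqrt (hπ i).le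
  have he4 : ∀ i, e i ^ 4 = π i * πbar i := by
    intro i
    rw [hedef, ← Real.rpow_natCast ((π i * πbar i) ^ ((1:ℝ)/4)) 4,
      ← Real.rpow_mul (mul_pos (hπ i) (hπb i)).le]
    norm_num
  -- symmetry of dconj c P
  have hsymS : ∀ i j, (dconj c P) i j = (dconj c P) j i := by
    intro i j
    show c i * P i j * (c j)⁻¹ = c j * P j i * (c i)⁻¹
    have hci := (hc i).ne'
    have hcj := (hc j).ne'
    field_simp
    linear_combination P i j * hc2 i - P j i * hc2 j + hrev i j
  -- symmetry of dconj e M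
  have hsymT : ∀ i j, (dconj e M) i j = (dconj e M) j i := by
    intro i j
    show e i * M i j * (e j)⁻¹ = e j * M j i * (e i)⁻¹
    have ha : 0 ≤ e i * M i j * (e j)⁻¹ :=
      mul_nonneg (mul_nonneg (he i).le (hMnn i j)) (inv_nonneg.mpr (he j).le)
    have hb : 0 ≤ e j * M j i * (e i)⁻¹ :=
      mul_nonneg (mul_nonneg (he j).le (hMnn j i)) (inv_nonneg.mpr (he i).le)
    have hMij : M i j ^ 2 = P i j * Pbar i j := by
      rw [hMel]; exact Real.sq_sqrt (mul_nonneg (hP.1 i j) (hPbar.1 i j))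
    have hMji : M j i ^ 2 = P j i * Pbar j i := by
      rw [hMel]; exact Real.sq_sqrt (mul_nonneg (hP.1 j i) (hPbar.1 j i))
    have h4 : (π i * πbar i) * (P i j * Pbar i j) = (π j * πbar j) * (P j i * Pbar j i) := by
      linear_combination (πbar i * Pbar i j) * hrev i j + (π j * P j i) * hrevbar i j
    have hsq : (e i * M i j * (e j)⁻¹) ^ 2 = (e j * M j i * (e i)⁻¹) ^ 2 := by
      have hnei : e i ≠ 0 := (he i).ne'
      have hnej : e j ≠ 0 := (he j).ne'
      have expand : ∀ (x y z : ℝ), z ≠ 0 → (x * y * z⁻¹) ^ 2 = x ^ 2 * y ^ 2 / z ^ 2 := by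
        intro x y z hz; field_simp
      rw [expand _ _ _ hnej, expand _ _ _ hnei,
        div_eq_div_iff (pow_pos (he j) 2).ne' (pow_pos (he i) 2).ne']
      linear_combination (M i j ^ 2) * he4 i - (M j i ^ 2) * he4 j
        + (π i * πbar i) * hMij - (π j * πbar j) * hMji + h4
    calc e i * M i j * (e j)⁻¹ = Real.sqrt ((e i * M i j * (e j)⁻¹) ^ 2) :=
          (Real.sqrt_sq ha).symm
    _ = Real.sqrt ((e j * M j i * (e i)⁻¹) ^ 2) := by rw [hsq]
    _ = e j * M j i * (e i)⁻¹ := Real.sqrt_sq hb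
  -- norm of dconj c P
  have hnormS : ‖(dconj c P).map (algebraMap ℝ ℂ)‖ ≤ 1 := by
    rw [← rho_eq_norm_of_symm _ hsymS, spectralRadius_dconj c hc P]
    calc (spectralRadius ℂ (P.map (algebraMap ℝ ℂ))).toReal
        ≤ (1 : ENNReal).toReal :=
          ENNReal.toReal_mono ENNReal.one_ne_top (rho_le_one_of_stochastic hP.1 hP.2)
    _ = 1 := ENNReal.toReal_one
  -- norm of dconj e M equals rho M
  have hnormT : ‖(dconj e M).map (algebraMap ℝ ℂ)‖
      = (spectralRadius ℂ (M.map (algebraMap ℝ ℂ))).toReal := by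
    rw [← rho_eq_norm_of_symm _ hsymT, spectralRadius_dconj e he M]
  set ρM : ℝ := (spectralRadius ℂ (M.map (algebraMap ℝ ℂ))).toReal with hρMdef
  have hρMnn : 0 ≤ ρM := ENNReal.toReal_nonneg
  -- diagonal norms
  have hgub : ∀ i, g i ≤ (1 + ε) ^ ((1:ℝ)/4) := fun i =>
    Real.rpow_le_rpow (div_pos (hπ i) (hπb i)).le (hub i) (by norm_num)
  have hginv : ∀ i, (g i)⁻¹ ≤ ((1 - ε)⁻¹) ^ ((1:ℝ)/4) := by
    intro i
    rw [hgdef, ← Real.inv_rpow (div_pos (hπ i) (hπb i)).le]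
    refine Real.rpow_le_rpow (inv_nonneg.mpr (div_pos (hπ i) (hπb i)).le) ?_ (by norm_num)
    rw [inv_div]
    exact hinvb i
  have hDg : ‖((dunit g hg : (Matrix (Fin d) (Fin d) ℂ)ˣ) : Matrix (Fin d) (Fin d) ℂ)‖
      ≤ (1 + ε) ^ ((1:ℝ)/4) := by
    have hmap : ((dunit g hg : (Matrix (Fin d) (Fin d) ℂ)ˣ) : Matrix (Fin d) (Fin d) ℂ)
        = (Matrix.diagonal g).map (algebraMap ℝ ℂ) := by
      show Matrix.diagonal _ = _
      ext i j
      by_cases h : i = j <;> simp [Matrix.map_apply, Matrix.diagonal_apply, h]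
    rw [hmap]
    exact l2_norm_diagonal_le g _ (fun i => (hg i).le) hgub
  have hDginv : ‖(((dunit g hg)⁻¹ : (Matrix (Fin d) (Fin d) ℂ)ˣ) : Matrix (Fin d) (Fin d) ℂ)‖
      ≤ ((1 - ε)⁻¹) ^ ((1:ℝ)/4) := by
    have hmap : (((dunit g hg)⁻¹ : (Matrix (Fin d) (Fin d) ℂ)ˣ) : Matrix (Fin d) (Fin d) ℂ)
        = (Matrix.diagonal fun i => (g i)⁻¹).map (algebraMap ℝ ℂ) := by
      show Matrix.diagonal _ = _
      ext i j
      by_cases h : i = j <;> simp [Matrix.map_apply, Matrix.diagonal_apply, h]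
    rw [hmap]
    exact l2_norm_diagonal_le _ _ (fun i => (inv_nonneg.mpr (hg i).le)) hginv
  -- norm of dconj c M
  have hnormM : ‖(dconj c M).map (algebraMap ℝ ℂ)‖
      ≤ (1 + ε) ^ ((1:ℝ)/4) * (((1 - ε)⁻¹) ^ ((1:ℝ)/4)) * ρM := by
    have hsplit : dconj c M = dconj g (dconj e M) := by
      rw [← dconj_dconj, ← hce]
    rw [hsplit, map_dconj g hg]
    calc ‖_ * (dconj e M).map (algebraMap ℝ ℂ) * _‖
        ≤ ‖(dunit g hg : (Matrix (Fin d) (Fin d) ℂ)ˣ) * (dconj e M).map (algebraMap ℝ ℂ)‖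
          * ‖(((dunit g hg)⁻¹ : (Matrix (Fin d) (Fin d) ℂ)ˣ) : Matrix (Fin d) (Fin d) ℂ)‖ :=
          Matrix.l2_opNorm_mul _ _
    _ ≤ (‖((dunit g hg : (Matrix (Fin d) (Fin d) ℂ)ˣ) : Matrix (Fin d) (Fin d) ℂ)‖
          * ‖(dconj e M).map (algebraMap ℝ ℂ)‖)
          * ‖(((dunit g hg)⁻¹ : (Matrix (Fin d) (Fin d) ℂ)ˣ) : Matrix (Fin d) (Fin d) ℂ)‖ := by
          refine mul_le_mul_of_nonneg_right (Matrix.l2_opNorm_mul _ _) (norm_nonneg _)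
    _ ≤ ((1 + ε) ^ ((1:ℝ)/4) * ρM) * (((1 - ε)⁻¹) ^ ((1:ℝ)/4)) := by
          refine mul_le_mul ?_ hDginv (norm_nonneg _) (by positivity)
          rw [hnormT]
          exact mul_le_mul_of_nonneg_right hDg hρMnn
    _ = (1 + ε) ^ ((1:ℝ)/4) * (((1 - ε)⁻¹) ^ ((1:ℝ)/4)) * ρM := by ring
  -- main chain for part 1
  have hchain : rho A ≤ Real.sqrt α
      + Real.sqrt (1 - α) * ((1 + ε) ^ ((1:ℝ)/4) * (((1 - ε)⁻¹) ^ ((1:ℝ)/4))) * ρM := by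
    have h1 : rho A = (spectralRadius ℂ ((dconj c A).map (algebraMap ℝ ℂ))).toReal := by
      rw [rho, spectralRadius_dconj c hc A]
    have h2 : (spectralRadius ℂ ((dconj c A).map (algebraMap ℝ ℂ))).toReal
        ≤ ‖(dconj c A).map (algebraMap ℝ ℂ)‖ := toReal_spectralRadius_le_norm _
    have h3 : ‖(dconj c A).map (algebraMap ℝ ℂ)‖ ≤ ‖(dconj c B).map (algebraMap ℝ ℂ)‖ := by
      refine l2_opNorm_mono (fun i j => ?_) (fun i j => ?_)
      · show 0 ≤ c i * A i j * (c j)⁻¹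
        exact mul_nonneg (mul_nonneg (hc i).le (hAnn i j)) (inv_nonneg.mpr (hc j).le)
      · show c i * A i j * (c j)⁻¹ ≤ c i * B i j * (c j)⁻¹
        exact mul_le_mul_of_nonneg_right
          (mul_le_mul_of_nonneg_left (hAB i j) (hc i).le)
          (inv_nonneg.mpr (hc j).le)
    have h4 : (dconj c B).map (algebraMap ℝ ℂ)
        = ((Real.sqrt α : ℝ) : ℂ) • (dconj c P).map (algebraMap ℝ ℂ)
          + ((Real.sqrt (1 - α) : ℝ) : ℂ) • (dconj c M).map (algebraMap ℝ ℂ) := by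
      ext i j
      simp only [dconj, Matrix.map_apply, Matrix.add_apply, Matrix.smul_apply, Matrix.of_apply,
        hBel, smul_eq_mul, Complex.coe_algebraMap]
      push_cast
      ring
    have h5 : ‖(dconj c B).map (algebraMap ℝ ℂ)‖
        ≤ Real.sqrt α * ‖(dconj c P).map (algebraMap ℝ ℂ)‖
          + Real.sqrt (1 - α) * ‖(dconj c M).map (algebraMap ℝ ℂ)‖ := by
      rw [h4]
      refine le_trans (norm_add_le _ _) ?_
      rw [norm_smul, norm_smul, Complex.norm_real, Complex.norm_real,
        Real.norm_of_nonneg (Real.sqrt_nonneg _), Real.norm_of_nonneg (Real.sqrt_nonneg _)]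
    calc rho A ≤ ‖(dconj c B).map (algebraMap ℝ ℂ)‖ := by
          rw [h1]; exact le_trans h2 h3
    _ ≤ Real.sqrt α * ‖(dconj c P).map (algebraMap ℝ ℂ)‖
          + Real.sqrt (1 - α) * ‖(dconj c M).map (algebraMap ℝ ℂ)‖ := h5
    _ ≤ Real.sqrt α * 1 + Real.sqrt (1 - α)
          * ((1 + ε) ^ ((1:ℝ)/4) * (((1 - ε)⁻¹) ^ ((1:ℝ)/4)) * ρM) := by
          refine add_le_add (mul_le_mul_of_nonneg_left hnormS (Real.sqrt_nonneg _))
            (mul_le_mul_of_nonneg_left hnormM (Real.sqrt_nonneg _))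
    _ = Real.sqrt α + Real.sqrt (1 - α)
          * ((1 + ε) ^ ((1:ℝ)/4) * (((1 - ε)⁻¹) ^ ((1:ℝ)/4))) * ρM := by ring
  have hKeq : ((1 + ε) / (1 - ε)) ^ ((1:ℝ)/4)
      = (1 + ε) ^ ((1:ℝ)/4) * (((1 - ε)⁻¹) ^ ((1:ℝ)/4)) := by
    rw [div_eq_mul_inv, Real.mul_rpow (by positivity) (by positivity)]
  have part1 : rho A ≤ Real.sqrt α
      + Real.sqrt (1 - α) * ((1 + ε) / (1 - ε)) ^ ((1:ℝ)/4) * ρM := by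
    rw [hKeq]; exact hchain
  have hρMeq : ρM = rho M := rfl
  refine ⟨by rw [hρMeq] at part1; exact part1, ?_⟩
  -- part 2
  have hK2 : ((1 + ε) / (1 - ε)) ^ ((1:ℝ)/4) ≤ 2 * Real.sqrt ((1 - ε)⁻¹) := by
    rw [hKeq, Real.sqrt_eq_rpow]
    have hb1 : (1:ℝ) ≤ (1 - ε)⁻¹ := (one_le_inv₀ h1ε).mpr (by linarith)
    have h14 : (1 + ε) ^ ((1:ℝ)/4) ≤ 2 := by
      calc (1 + ε) ^ ((1:ℝ)/4) ≤ (2:ℝ) ^ ((1:ℝ)/4) :=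
            Real.rpow_le_rpow (by linarith) (by linarith) (by norm_num)
      _ ≤ (2:ℝ) ^ (1:ℝ) := Real.rpow_le_rpow_of_exponent_le (by norm_num) (by norm_num)
      _ = 2 := Real.rpow_one 2
    have h24 : ((1 - ε)⁻¹) ^ ((1:ℝ)/4) ≤ ((1 - ε)⁻¹) ^ ((1:ℝ)/2) :=
      Real.rpow_le_rpow_of_exponent_le hb1 (by norm_num)
    exact mul_le_mul h14 h24 (Real.rpow_nonneg (inv_nonneg.mpr h1ε.le) _) (by norm_num)
  have hLsplit : Real.sqrt ((1 - α) / (1 - ε))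
      = Real.sqrt (1 - α) * Real.sqrt ((1 - ε)⁻¹) := by
    rw [div_eq_mul_inv, Real.sqrt_mul h1a]
  set L : ℝ := 2 * Real.sqrt ((1 - α) / (1 - ε)) with hLdef
  have hL0 : 0 ≤ L := by positivity
  have hcoef : Real.sqrt (1 - α) * ((1 + ε) / (1 - ε)) ^ ((1:ℝ)/4) ≤ L := by
    calc Real.sqrt (1 - α) * ((1 + ε) / (1 - ε)) ^ ((1:ℝ)/4)
        ≤ Real.sqrt (1 - α) * (2 * Real.sqrt ((1 - ε)⁻¹)) :=
          mul_le_mul_of_nonneg_left hK2 (Real.sqrt_nonneg _)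
    _ = L := by rw [hLdef, hLsplit]; ring
  have hpart : rho A ≤ Real.sqrt α + L * ρM := by
    refine le_trans part1 ?_
    have h1 : Real.sqrt (1 - α) * ((1 + ε) / (1 - ε)) ^ ((1:ℝ)/4) * ρM ≤ L * ρM :=
      mul_le_mul_of_nonneg_right hcoef hρMnn
    linarith
  have hmc1 : mcDist P Pbar = 1 - rho M := by
    rw [mcDist, ← hMdef]
  have hmc2 : mcDist P Q = 1 - rho A := by
    rw [mcDist, ← hAdef]
  rw [hmc1, hmc2]
  have hexp : L * (1 - rho M) = L - L * ρM := by rw [← hρMeq]; ring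
  rw [hexp]
  linarith
end

section
/- Let α ≥ 0 and let (B_t) be Bernoulli random variables, not necessarily independent, such that for every t, the conditional expectation E[B_t | B_1 = b_1, …, B_{t-1} = b_{t-1}] ≥ α for all histories b_1,…,b_{t-1} ∈ {0,1}. Then for every n, P(Σ_{t=1}^n B_t ≤ αn/2) ≤ exp(-α²n/2). -/
open MeasureTheory

open Real in
private lemma hoeffding_scalar (p : ℝ) (hp0 : 0 ≤ p) (hp1 : p ≤ 1) (l : ℝ) (hl : 0 ≤ l) :
    1 - p + p * Real.exp (-l) ≤ Real.exp (-(l * p) + l ^ 2 / 8) := by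
  set K : ℝ → ℝ := fun x => 1 - p + p * Real.exp (-x) with hKdef
  have hKpos : ∀ x, 0 < K x := by
    intro x
    rcases eq_or_lt_of_le hp1 with h | h
    · subst h; simp [hKdef, exp_pos]
    · have := exp_pos (-x)
      have : 0 ≤ p * Real.exp (-x) := mul_nonneg hp0 this.le
      simp only [hKdef]; linarith
  have hK : ∀ x, HasDerivAt K (-(p * Real.exp (-x))) x := by
    intro x
    have h1 : HasDerivAt (fun x : ℝ => Real.exp (-x)) (Real.exp (-x) * (-1)) x :=
      ((hasDerivAt_id x).neg).exp
    have h2 := (h1.const_mul p).const_add (1 - p)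
    refine h2.congr_deriv ?_; ring
  set D : ℝ → ℝ := fun x => -(p * Real.exp (-x)) / K x + p - x / 4 with hDdef
  set L : ℝ → ℝ := fun x => Real.log (K x) + p * x - x ^ 2 / 8 with hLdef
  have hL : ∀ x, HasDerivAt L (D x) x := by
    intro x
    have h1 : HasDerivAt (fun x => Real.log (K x)) (-(p * Real.exp (-x)) / K x) x :=
      (hK x).log (hKpos x).ne'
    have h2 := (h1.add ((hasDerivAt_id x).const_mul p)).sub ((hasDerivAt_pow 2 x).div_const 8)
    refine h2.congr_deriv ?_
    simp [hDdef]; ring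
  have hD : ∀ x, HasDerivAt D
      ((p * Real.exp (-x) * K x - (p * Real.exp (-x)) ^ 2) / (K x) ^ 2 - 1 / 4) x := by
    intro x
    have hu : HasDerivAt (fun x : ℝ => -(p * Real.exp (-x))) (p * Real.exp (-x)) x := by
      have h1 : HasDerivAt (fun x : ℝ => Real.exp (-x)) (Real.exp (-x) * (-1)) x :=
        ((hasDerivAt_id x).neg).exp
      have := (h1.const_mul p).neg
      refine this.congr_deriv ?_; ring
    have h2 := ((hu.div (hK x) (hKpos x).ne').add_const p).sub ((hasDerivAt_id x).div_const 4)
    refine h2.congr_deriv ?_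
    field_simp
  have hDderiv_nonpos : ∀ x, deriv D x ≤ 0 := by
    intro x
    rw [(hD x).deriv]
    have hK2 : (0:ℝ) < (K x) ^ 2 := pow_pos (hKpos x) 2
    have hnum : p * Real.exp (-x) * K x - (p * Real.exp (-x)) ^ 2 ≤ (K x) ^ 2 / 4 := by
      nlinarith [sq_nonneg (1 - p - p * Real.exp (-x))]
    have := (div_le_div_iff_of_pos_right hK2).mpr hnum
    have h4 : (K x) ^ 2 / 4 / (K x) ^ 2 = 1 / 4 := by field_simp [(hKpos x).ne']
    linarith [this.trans_eq h4]
  have hD0 : D 0 = 0 := by simp [hDdef, hKdef]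
  have hDle : ∀ x, 0 ≤ x → D x ≤ 0 := by
    intro x hx
    have hanti : AntitoneOn D (Set.Ici 0) := by
      apply antitoneOn_of_deriv_nonpos (convex_Ici 0)
        (fun y _ => (hD y).differentiableAt.continuousAt.continuousWithinAt)
        (fun y _ => (hD y).differentiableAt.differentiableWithinAt)
        (fun y _ => hDderiv_nonpos y)
    have := hanti (Set.self_mem_Ici) (Set.mem_Ici.2 hx) hx
    rwa [hD0] at this
  have hLle : L l ≤ 0 := by
    have hanti : AntitoneOn L (Set.Ici 0) := by
      apply antitoneOn_of_deriv_nonpos (convex_Ici 0)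
        (fun y _ => (hL y).differentiableAt.continuousAt.continuousWithinAt)
        (fun y _ => (hL y).differentiableAt.differentiableWithinAt)
      intro y hy
      rw [(hL y).deriv]
      exact hDle y (le_of_lt (by simpa using hy))
    have := hanti (Set.self_mem_Ici) (Set.mem_Ici.2 hl) hl
    have hL0 : L 0 = 0 := by simp [hLdef, hKdef]
    linarith [this.trans_eq hL0]
  have hlog : Real.log (K l) ≤ -(l * p) + l ^ 2 / 8 := by
    simp only [hLdef] at hLle; linarith
  have := (Real.log_le_iff_le_exp (hKpos l)).1 hlog
  simpa [hKdef] using this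

/-- Chernoff-type bound for (possibly dependent) Bernoulli variables whose conditional
means, given any history, are at least `α`: the probability that the first `n` sum to at
most `αn/2` is at most `exp(-α²n/2)`. -/
theorem bernoulli_history_lower_bound {Ω : Type*} [MeasurableSpace Ω]
    (μ : Measure Ω) [IsProbabilityMeasure μ]
    (B : ℕ → Ω → ℝ) (hmeas : ∀ t, Measurable (B t))
    (hBern : ∀ t ω, B t ω = 0 ∨ B t ω = 1)
    (α : ℝ) (hα : 0 ≤ α)
    (hcond : ∀ (t : ℕ) (b : ℕ → ℝ),
      α * (μ {ω | ∀ s < t, B s ω = b s}).toReal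
        ≤ ∫ ω in {ω | ∀ s < t, B s ω = b s}, B t ω ∂μ)
    (n : ℕ) :
    (μ {ω | ∑ t ∈ Finset.range n, B t ω ≤ α * n / 2}).toReal
      ≤ Real.exp (-(α ^ 2) * n / 2) := by
  classical
  set l : ℝ := 2 * α with hldef
  have hl0 : 0 ≤ l := by positivity
  have hB01 : ∀ t ω, 0 ≤ B t ω ∧ B t ω ≤ 1 := by
    intro t ω; rcases hBern t ω with h | h <;> rw [h] <;> norm_num
  -- integrability helper
  have hIntB : ∀ (f : Ω → ℝ), Measurable f → (∀ ω, ‖f ω‖ ≤ 1) → Integrable f μ := by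
    intro f hm hb
    exact (integrable_const 1).mono' hm.aestronglyMeasurable (ae_of_all _ hb)
  -- α ≤ 1
  have hα1 : α ≤ 1 := by
    have h0 := hcond 0 (fun _ => 0)
    have hset : {ω : Ω | ∀ s < 0, B s ω = 0} = Set.univ := by
      ext ω; simp
    rw [hset] at h0
    simp only [measure_univ, ENNReal.toReal_one, mul_one, Measure.restrict_univ] at h0
    have hle : ∫ ω, B 0 ω ∂μ ≤ ∫ _ω, (1:ℝ) ∂μ := by
      apply integral_mono (hIntB _ (hmeas 0) ?_) (integrable_const 1) (fun ω => (hB01 0 ω).2)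
      intro ω
      rw [Real.norm_eq_abs, abs_le]
      exact ⟨by linarith [(hB01 0 ω).1], (hB01 0 ω).2⟩
    simpa using h0.trans hle
  -- the exponential weight
  set g : ℕ → Ω → ℝ := fun t ω => ∏ s ∈ Finset.range t, Real.exp (-(l * B s ω)) with hgdef
  have hgmeas : ∀ t, Measurable (g t) := by
    intro t
    apply Finset.measurable_prod
    intro s _
    exact ((measurable_const.mul (hmeas s)).neg).exp
  have hgpos : ∀ t ω, 0 < g t ω := by
    intro t ω; exact Finset.prod_pos fun s _ => Real.exp_pos _
  have hgle1 : ∀ t ω, g t ω ≤ 1 := by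
    intro t ω
    apply Finset.prod_le_one (fun s _ => (Real.exp_pos _).le)
    intro s _
    rw [Real.exp_le_one_iff]
    have := mul_nonneg hl0 (hB01 s ω).1
    linarith
  have hgnorm : ∀ t ω, ‖g t ω‖ ≤ 1 := by
    intro t ω; rw [Real.norm_eq_abs, abs_le]
    exact ⟨by linarith [hgpos t ω], hgle1 t ω⟩
  have hgint : ∀ t, Integrable (g t) μ := fun t => hIntB _ (hgmeas t) (hgnorm t)
  have hgBint : ∀ t, Integrable (fun ω => g t ω * B t ω) μ := by
    intro t
    apply hIntB _ ((hgmeas t).mul (hmeas t))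
    intro ω
    rw [Real.norm_eq_abs, abs_le, Pi.mul_apply]
    constructor
    · nlinarith [hgpos t ω, (hB01 t ω).1]
    · nlinarith [hgpos t ω, hgle1 t ω, (hB01 t ω).1, (hB01 t ω).2]
  -- Key conditional step
  have keyA : ∀ t, α * ∫ ω, g t ω ∂μ ≤ ∫ ω, g t ω * B t ω ∂μ := by
    intro t
    set bv : (Fin t → Bool) → ℕ → ℝ :=
      fun v s => if h : s < t then (if v ⟨s, h⟩ then 1 else 0) else 0 with hbvdef
    set A : (Fin t → Bool) → Set Ω := fun v => {ω | ∀ s < t, B s ω = bv v s} with hAdef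
    set c : (Fin t → Bool) → ℝ :=
      fun v => ∏ s ∈ Finset.range t, Real.exp (-(l * bv v s)) with hcdef
    have hAmeas : ∀ v, MeasurableSet (A v) := by
      intro v
      have : A v = ⋂ s ∈ Finset.range t, (B s) ⁻¹' {bv v s} := by
        ext ω; simp [hAdef, Finset.mem_range]
      rw [this]
      exact MeasurableSet.biInter (Set.to_countable _)
        (fun s _ => hmeas s (measurableSet_singleton _))
    have hcover : ∀ ω : Ω, ω ∈ A (fun s => if B s.1 ω = 1 then true else false) := by
      intro ω s hs
      simp only [hbvdef, dif_pos hs]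
      rcases hBern s ω with h | h <;> simp [h]
    have hdisj : ∀ v w : Fin t → Bool, v ≠ w → Disjoint (A v) (A w) := by
      intro v w hvw
      rw [Set.disjoint_left]
      intro ω hv hw
      apply hvw
      funext s
      have h1 := hv s.1 s.2
      have h2 := hw s.1 s.2
      rw [h1] at h2
      simp only [hbvdef, dif_pos s.2] at h2
      cases hvs : v s <;> cases hws : w s <;>
        simp [hvs, hws] at h2 ⊢
    have hunion : ⋃ v ∈ (Finset.univ : Finset (Fin t → Bool)), A v = Set.univ := by
      apply Set.eq_univ_of_forall
      intro ω
      exact Set.mem_biUnion (Finset.mem_univ (fun s : Fin t => if B s.1 ω = 1 then true else false)) (hcover ω)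
    have hsplit : ∀ (f : Ω → ℝ), Integrable f μ →
        ∫ ω, f ω ∂μ = ∑ v : Fin t → Bool, ∫ ω in A v, f ω ∂μ := by
      intro f hf
      rw [← setIntegral_univ (μ := μ), ← hunion,
        integral_biUnion_finset Finset.univ (fun v _ => hAmeas v)
          (fun v _ w _ hvw => hdisj v w hvw) (fun v _ => hf.integrableOn)]
    have hgA : ∀ v, ∀ ω ∈ A v, g t ω = c v := by
      intro v ω hω
      apply Finset.prod_congr rfl
      intro s hs
      rw [hω s (Finset.mem_range.1 hs)]
    have hcnonneg : ∀ v, 0 ≤ c v := fun v => Finset.prod_nonneg fun s _ => (Real.exp_pos _).le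
    have hInt1 : ∫ ω, g t ω ∂μ = ∑ v : Fin t → Bool, c v * (μ (A v)).toReal := by
      rw [hsplit _ (hgint t)]
      apply Finset.sum_congr rfl
      intro v _
      rw [setIntegral_congr_fun (hAmeas v) (fun ω hω => hgA v ω hω), setIntegral_const]
      simp [mul_comm, measureReal_def]
    have hInt2 : ∫ ω, g t ω * B t ω ∂μ
        = ∑ v : Fin t → Bool, c v * ∫ ω in A v, B t ω ∂μ := by
      rw [hsplit _ (hgBint t)]
      apply Finset.sum_congr rfl
      intro v _
      have heq : Set.EqOn (fun ω => g t ω * B t ω) (fun ω => c v * B t ω) (A v) := by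
        intro ω hω
        show g t ω * B t ω = c v * B t ω
        rw [hgA v ω hω]
      rw [setIntegral_congr_fun (hAmeas v) heq, integral_const_mul]
    rw [hInt1, hInt2, Finset.mul_sum]
    apply Finset.sum_le_sum
    intro v _
    calc α * (c v * (μ (A v)).toReal) = c v * (α * (μ (A v)).toReal) := by ring
      _ ≤ c v * ∫ ω in A v, B t ω ∂μ :=
        mul_le_mul_of_nonneg_left (hcond t (bv v)) (hcnonneg v)
  -- one-step recursion
  set K : ℝ := 1 - α + α * Real.exp (-l) with hKdef
  have hK0 : 0 ≤ K := by
    have := mul_nonneg hα (Real.exp_pos (-l)).le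
    simp only [hKdef]; linarith
  have keyB : ∀ t, ∫ ω, g (t + 1) ω ∂μ ≤ K * ∫ ω, g t ω ∂μ := by
    intro t
    have hpt : ∀ ω, g (t + 1) ω
        = g t ω - (1 - Real.exp (-l)) * (g t ω * B t ω) := by
      intro ω
      have h1 : g (t+1) ω = g t ω * Real.exp (-(l * B t ω)) := Finset.prod_range_succ _ _
      have h2 : Real.exp (-(l * B t ω)) = 1 - (1 - Real.exp (-l)) * B t ω := by
        rcases hBern t ω with h | h <;> rw [h] <;> simp <;> ring
      rw [h1, h2]; ring
    have hInt : ∫ ω, g (t+1) ω ∂μ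
        = ∫ ω, g t ω ∂μ - (1 - Real.exp (-l)) * ∫ ω, g t ω * B t ω ∂μ := by
      calc ∫ ω, g (t+1) ω ∂μ
          = ∫ ω, (g t ω - (1 - Real.exp (-l)) * (g t ω * B t ω)) ∂μ := by
            apply integral_congr_ae (ae_of_all _ hpt)
        _ = ∫ ω, g t ω ∂μ - (1 - Real.exp (-l)) * ∫ ω, g t ω * B t ω ∂μ := by
            rw [integral_sub (hgint t) ((hgBint t).const_mul _), integral_const_mul]
    have hexple : Real.exp (-l) ≤ 1 := by
      rw [Real.exp_le_one_iff]; linarith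
    have := mul_le_mul_of_nonneg_left (keyA t) (by linarith : 0 ≤ 1 - Real.exp (-l))
    rw [hInt, hKdef]
    nlinarith [this]
  -- iterate
  have hgn : ∀ m, ∫ ω, g m ω ∂μ ≤ K ^ m := by
    intro m
    induction m with
    | zero => simp [hgdef]
    | succ t ih =>
      calc ∫ ω, g (t+1) ω ∂μ ≤ K * ∫ ω, g t ω ∂μ := keyB t
        _ ≤ K * K ^ t := mul_le_mul_of_nonneg_left ih hK0
        _ = K ^ (t+1) := by ring
  -- Markov / Chernoff step
  set E : Set Ω := {ω | ∑ t ∈ Finset.range n, B t ω ≤ α * n / 2} with hEdef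
  have hEmeas : MeasurableSet E :=
    measurableSet_le (Finset.measurable_sum _ fun t _ => hmeas t) measurable_const
  have hgexp : ∀ ω, g n ω = Real.exp (-(l * ∑ t ∈ Finset.range n, B t ω)) := by
    intro ω
    show ∏ s ∈ Finset.range n, Real.exp (-(l * B s ω)) = _
    rw [← Real.exp_sum]
    congr 1
    rw [Finset.mul_sum, ← Finset.sum_neg_distrib]
  have hpoint : ∀ ω, E.indicator (fun _ => (1:ℝ)) ω
      ≤ Real.exp (l * α * n / 2) * g n ω := by
    intro ω
    by_cases hω : ω ∈ E
    · rw [Set.indicator_of_mem hω, hgexp ω, ← Real.exp_add]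
      apply Real.one_le_exp
      have hS : ∑ t ∈ Finset.range n, B t ω ≤ α * n / 2 := hω
      nlinarith [mul_le_mul_of_nonneg_left hS hl0]
    · rw [Set.indicator_of_notMem hω]
      positivity
  have hmarkov : (μ E).toReal ≤ Real.exp (l * α * n / 2) * ∫ ω, g n ω ∂μ := by
    rw [← measureReal_def, ← integral_indicator_one hEmeas, ← integral_const_mul]
    exact integral_mono ((integrable_const 1).indicator hEmeas)
      ((hgint n).const_mul _) hpoint
  -- finish
  have hhoef : K ≤ Real.exp (-(l * α) + l ^ 2 / 8) := hoeffding_scalar α hα hα1 l hl0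
  have hKn : K ^ n ≤ Real.exp ((-(l * α) + l ^ 2 / 8) * n) := by
    calc K ^ n ≤ Real.exp (-(l * α) + l ^ 2 / 8) ^ n := pow_le_pow_left₀ hK0 hhoef n
      _ = Real.exp ((-(l * α) + l ^ 2 / 8) * n) := by
          rw [← Real.exp_nat_mul]; ring_nf
  calc (μ E).toReal ≤ Real.exp (l * α * n / 2) * ∫ ω, g n ω ∂μ := hmarkov
    _ ≤ Real.exp (l * α * n / 2) * K ^ n :=
        mul_le_mul_of_nonneg_left (hgn n) (Real.exp_pos _).le
    _ ≤ Real.exp (l * α * n / 2) * Real.exp ((-(l * α) + l ^ 2 / 8) * n) :=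
        mul_le_mul_of_nonneg_left hKn (Real.exp_pos _).le
    _ = Real.exp (-(α ^ 2) * n / 2) := by
        rw [← Real.exp_add, hldef]
        congr 1
        ring
end

section
/- For every ε > 0 and δ > 0 there exist two irreducible reversible Markov chains P, P̄ on 2 states such that Distance(P,P̄) = 1 - ρ(√(P∘P̄)) < ε while the squared Hellinger distance between their stationary distributions exceeds 1/4. Concretely, for small α > 0 take P = [[1-α, α],[1/2, 1/2]] and P̄ = [[1-α, α],[α, 1-α]]: then as α → 0, Distance(P,P̄) → 0 while d²_Hel(π, π̄) → 1 - 1/√2 > 1/4. -/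
open Matrix BigOperators Finset
open scoped ENNReal NNReal

lemma lam_le_rho (a b c d lam : ℝ) (hlam : 0 ≤ lam)
    (hroot : lam ^ 2 - (a + d) * lam + (a * d - b * c) = 0) :
    lam ≤ rho !![a, b; c, d] := by
  set B : Matrix (Fin 2) (Fin 2) ℂ := (!![a, b; c, d]).map (algebraMap ℝ ℂ) with hB
  have hBent : B = !![(a:ℂ), b; c, d] := by
    ext i j; fin_cases i <;> fin_cases j <;> simp [hB, Matrix.map_apply]
  set l : ℂ := (lam : ℂ) with hl
  set s : ℂ := ((a + d - lam : ℝ) : ℂ) with hs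
  have hdet : ∀ μ : ℂ, (algebraMap ℂ (Matrix (Fin 2) (Fin 2) ℂ) μ - B).det
      = (μ - l) * (μ - s) := by
    intro μ
    have h2 : (lam:ℂ) ^ 2 - ((a:ℂ) + d) * lam + ((a:ℂ) * d - b * c) = 0 := by
      have := congrArg (fun x : ℝ => (x : ℂ)) hroot
      push_cast at this ⊢
      linear_combination this
    rw [hBent]
    simp [Matrix.det_fin_two, Matrix.algebraMap_matrix_apply]
    rw [hl, hs]
    push_cast
    ring_nf
    linear_combination h2
  have hmem : l ∈ spectrum ℂ B := by
    rw [spectrum.mem_iff]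
    intro h
    rw [Matrix.isUnit_iff_isUnit_det, hdet l] at h
    simp at h
  have hsub : spectrum ℂ B ⊆ {l, s} := by
    intro μ hμ
    rw [spectrum.mem_iff] at hμ
    have h0 : (μ - l) * (μ - s) = 0 := by
      by_contra h
      exact hμ (by
        rw [Matrix.isUnit_iff_isUnit_det, hdet μ]
        exact isUnit_iff_ne_zero.mpr h)
    rcases mul_eq_zero.mp h0 with h | h
    · exact Or.inl (sub_eq_zero.mp h)
    · exact Or.inr (sub_eq_zero.mp h)
  have hle : spectralRadius ℂ B ≤ ((max ‖l‖₊ ‖s‖₊ : NNReal) : ENNReal) := by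
    rw [spectralRadius]
    refine iSup₂_le fun k hk => ?_
    rcases hsub hk with h | h
    · subst h; exact_mod_cast le_max_left _ _
    · rw [Set.mem_singleton_iff] at h; subst h; exact_mod_cast le_max_right _ _
  have hne : spectralRadius ℂ B ≠ ⊤ := ne_top_of_le_ne_top (by simp) hle
  have hge : (‖l‖₊ : ℝ≥0∞) ≤ spectralRadius ℂ B :=
    le_iSup₂ (f := fun k (_ : k ∈ spectrum ℂ B) => (‖k‖₊ : ℝ≥0∞)) l hmem
  have := ENNReal.toReal_mono hne hge
  rw [ENNReal.coe_toReal] at this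
  have hnl : (‖l‖₊ : ℝ) = lam := by
    rw [coe_nnnorm, hl, Complex.norm_real, Real.norm_eq_abs, abs_of_nonneg hlam]
  rw [hnl] at this
  exact this

/-- There are irreducible reversible two-state chains arbitrarily close under the
distance whose stationary distributions are far apart in Hellinger distance. -/
theorem distance_small_hellinger_large (ε δ : ℝ) (hε : 0 < ε) (hδ : 0 < δ) :
    ∃ (P Pbar : Matrix (Fin 2) (Fin 2) ℝ) (π πbar : Fin 2 → ℝ),
      IsStochastic P ∧ IsStochastic Pbar
        ∧ IsIrreducibleMC P ∧ IsIrreducibleMC Pbar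
        ∧ IsStationaryMC P π ∧ IsStationaryMC Pbar πbar
        ∧ IsReversible P π ∧ IsReversible Pbar πbar
        ∧ mcDist P Pbar < ε
        ∧ 1 / 4 < 1 - ∑ i, Real.sqrt (π i * πbar i) := by
  set α : ℝ := min (ε / 2) (1 / 1000) with hα
  have hα0 : 0 < α := lt_min (by linarith) (by norm_num)
  have hα1000 : α ≤ 1 / 1000 := min_le_right _ _
  have hαε : α < ε := lt_of_le_of_lt (min_le_left _ _) (by linarith)
  have hα1 : α < 1 := lt_of_le_of_lt hα1000 (by norm_num)
  have h1α : (0:ℝ) ≤ 1 - α := by linarith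
  have hden : (0:ℝ) < 1 + 2 * α := by linarith
  refine ⟨!![1 - α, α; 1/2, 1/2], !![1 - α, α; α, 1 - α],
    ![1 / (1 + 2*α), 2*α / (1 + 2*α)], ![1/2, 1/2], ?_, ?_, ?_, ?_, ?_, ?_, ?_, ?_, ?_, ?_⟩
  · -- IsStochastic P
    constructor
    · intro i j; fin_cases i <;> fin_cases j <;> simp <;> linarith
    · intro i; fin_cases i <;> simp [Fin.sum_univ_two] <;> ring
  · constructor
    · intro i j; fin_cases i <;> fin_cases j <;> simp <;> linarith
    · intro i; fin_cases i <;> simp [Fin.sum_univ_two] <;> ring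
  · intro i j
    refine ⟨1, ?_⟩
    rw [pow_one]
    fin_cases i <;> fin_cases j <;> simp <;> linarith
  · intro i j
    refine ⟨1, ?_⟩
    rw [pow_one]
    fin_cases i <;> fin_cases j <;> simp <;> linarith
  · -- IsStationary P π
    refine ⟨?_, ?_, ?_⟩
    · intro i; fin_cases i <;> simp <;> positivity
    · simp [Fin.sum_univ_two]
      field_simp
    · intro j; fin_cases j <;> simp [Fin.sum_univ_two] <;> field_simp <;> ring
  · refine ⟨?_, ?_, ?_⟩
    · intro i; fin_cases i <;> norm_num
    · norm_num [Fin.sum_univ_two]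
    · intro j; fin_cases j <;> simp [Fin.sum_univ_two] <;> ring
  · -- IsReversible P π
    intro i j; fin_cases i <;> fin_cases j <;> simp <;> field_simp <;> ring
  · intro i j; fin_cases i <;> fin_cases j <;> simp <;> ring
  · -- mcDist < ε
    have hA : sqrtm (Matrix.hadamard !![1 - α, α; 1/2, 1/2] !![1 - α, α; α, 1 - α])
        = !![1 - α, α; Real.sqrt (α / 2), Real.sqrt ((1 - α) / 2)] := by
      ext i j
      fin_cases i <;> fin_cases j <;> simp [sqrtm, Matrix.hadamard]
      · exact Real.sqrt_mul_self h1α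
      · exact Real.sqrt_mul_self hα0.le
      · ring
      · ring
    set a : ℝ := 1 - α with ha
    set b : ℝ := α with hb
    set c : ℝ := Real.sqrt (α / 2) with hc
    set d : ℝ := Real.sqrt ((1 - α) / 2) with hd
    set s0 : ℝ := Real.sqrt ((a - d)^2 + 4 * (b * c)) with hs0def
    have hbc : 0 ≤ b * c := mul_nonneg hα0.le (Real.sqrt_nonneg _)
    have hs0sq : s0 ^ 2 = (a - d)^2 + 4 * (b * c) :=
      Real.sq_sqrt (by positivity)
    set lam : ℝ := ((a + d) + s0) / 2 with hlamdef
    have hd0 : 0 ≤ d := Real.sqrt_nonneg _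
    have hlam0 : 0 ≤ lam := by
      have : 0 ≤ s0 := Real.sqrt_nonneg _
      have ha0 : 0 ≤ a := h1α
      rw [hlamdef]; linarith
    have hroot : lam ^ 2 - (a + d) * lam + (a * d - b * c) = 0 := by
      linear_combination (lam - (a + d - s0) / 2) * hlamdef + (1 / 4) * hs0sq
    have hs0ge : a - d ≤ s0 := by
      have h1 : Real.sqrt ((a - d)^2) ≤ s0 := Real.sqrt_le_sqrt (by nlinarith)
      rw [Real.sqrt_sq_eq_abs] at h1
      exact le_trans (le_abs_self _) h1
    have hlamge : 1 - α ≤ lam := by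
      have : a ≤ lam := by rw [hlamdef]; linarith
      linarith [ha ▸ this]
    have hrho := lam_le_rho a b c d lam hlam0 hroot
    rw [mcDist, hA]
    have : 1 - rho !![a, b; c, d] ≤ 1 - lam := by linarith
    calc 1 - rho !![a, b; c, d] ≤ 1 - lam := this
      _ ≤ α := by linarith
      _ < ε := hαε
  · -- Hellinger
    rw [Fin.sum_univ_two]
    simp only [Matrix.cons_val_zero, Matrix.cons_val_one, Matrix.head_cons]
    have h1 : Real.sqrt (1 / (1 + 2*α) * (1/2)) ≤ Real.sqrt (1/2) := by
      apply Real.sqrt_le_sqrt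
      rw [div_mul_eq_mul_div, one_mul]
      rw [div_le_div_iff₀ hden (by norm_num)]
      linarith
    have h2 : Real.sqrt (2*α / (1 + 2*α) * (1/2)) ≤ Real.sqrt (1/1000) := by
      apply Real.sqrt_le_sqrt
      have : 2*α / (1 + 2*α) * (1/2) = α / (1 + 2*α) := by field_simp
      rw [this]
      have hle : α / (1 + 2*α) ≤ α := by
        rw [div_le_iff₀ hden]; nlinarith
      linarith
    have hs1 : Real.sqrt (1/2) < 0.708 := by
      rw [show (0.708:ℝ) = 0.708 from rfl]
      have := (Real.sqrt_lt' (x := (1:ℝ)/2) (y := 0.708) (by norm_num)).mpr (by norm_num)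
      exact this
    have hs2 : Real.sqrt (1/1000) < 0.032 := by
      have := (Real.sqrt_lt' (x := (1:ℝ)/1000) (y := 0.032) (by norm_num)).mpr (by norm_num)
      exact this
    linarith
end

section
/- Let A and B be real matrices of the same size. Then ρ(A∘B)² ≤ ρ(AAᵀ ∘ BBᵀ), where ∘ is the entrywise (Hadamard) product and ρ the spectral radius. -/
open Matrix

set_option linter.unusedSectionVars false

section RhoAux

open scoped ComplexOrder Matrix.Norms.L2Operator

variable {n : Type*} [Fintype n] [DecidableEq n]

set_option linter.unusedSectionVars false in
lemma sum4 {M : Type*} [AddCommMonoid M] (f : n → n → n → n → M) :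
    ∑ i, ∑ j, ∑ l, ∑ k, f i j l k = ∑ k, ∑ l, ∑ i, ∑ j, f i j l k := by
  conv_lhs => enter [2, i, 2, j]; rw [Finset.sum_comm]
  conv_lhs => enter [2, i]; rw [Finset.sum_comm]
  rw [Finset.sum_comm]
  conv_lhs => enter [2, k, 2, i]; rw [Finset.sum_comm]
  conv_lhs => enter [2, k]; rw [Finset.sum_comm]

lemma hadamard_hermitian (a b : Matrix n n ℂ) :
    (Matrix.hadamard (a * aᴴ) (b * bᴴ)).IsHermitian := by
  have ha := isHermitian_mul_conjTranspose_self a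
  have hb := isHermitian_mul_conjTranspose_self b
  ext i j
  simp only [conjTranspose_apply, hadamard_apply, star_mul']
  rw [← conjTranspose_apply, ← conjTranspose_apply, ha, hb]

/-- The Schur product theorem, in the form needed here. -/
lemma schur_psd (a b : Matrix n n ℂ) :
    (Matrix.hadamard (a * aᴴ) (b * bᴴ)
      - (Matrix.hadamard a b) * (Matrix.hadamard a b)ᴴ).PosSemidef := by
  refine posSemidef_iff_dotProduct_mulVec.mpr ⟨?_, ?_⟩
  · exact (hadamard_hermitian a b).sub (isHermitian_mul_conjTranspose_self _)
  · intro x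
    set c : n → n → ℂ := fun k l => ∑ j, a j k * b j l * star (x j) with hc
    have key1 : star x ⬝ᵥ ((Matrix.hadamard (a * aᴴ) (b * bᴴ)) *ᵥ x)
        = ∑ k, ∑ l, star (c k l) * (c k l) := by
      simp only [dotProduct, mulVec, hadamard_apply, mul_apply, conjTranspose_apply, Pi.star_apply,
        hc, star_sum, star_mul', star_star, Finset.mul_sum, Finset.sum_mul]
      rw [sum4]
      refine Finset.sum_congr rfl fun k _ => Finset.sum_congr rfl fun l _ =>
        Finset.sum_congr rfl fun i _ => Finset.sum_congr rfl fun j _ => by ring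
    have key2 : star x ⬝ᵥ (((Matrix.hadamard a b) * (Matrix.hadamard a b)ᴴ) *ᵥ x)
        = ∑ k, star (c k k) * (c k k) := by
      simp only [dotProduct, mulVec, hadamard_apply, mul_apply, conjTranspose_apply, Pi.star_apply,
        hc, star_sum, star_mul', star_star, Finset.mul_sum, Finset.sum_mul]
      conv_lhs => enter [2, i]; rw [Finset.sum_comm]
      rw [Finset.sum_comm]
      refine Finset.sum_congr rfl fun k _ => Finset.sum_congr rfl fun j _ =>
        Finset.sum_congr rfl fun i _ => by ring
    rw [sub_mulVec, dotProduct_sub, key1, key2, sub_nonneg]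
    refine Finset.sum_le_sum fun k _ =>
      Finset.single_le_sum (f := fun l => star (c k l) * c k l)
        (fun l _ => star_mul_self_nonneg _) (Finset.mem_univ k)

lemma rayleigh_le (N : Matrix n n ℂ) (u : n → ℂ) :
    (star u ⬝ᵥ N *ᵥ u).re
      ≤ ‖N‖ * (‖(WithLp.equiv 2 (n → ℂ)).symm u‖ * ‖(WithLp.equiv 2 (n → ℂ)).symm u‖) := by
  set X : EuclideanSpace ℂ n := (WithLp.equiv 2 (n → ℂ)).symm u with hX
  have h1 : star u ⬝ᵥ N *ᵥ u = @inner ℂ _ _ X ((WithLp.equiv 2 (n → ℂ)).symm (N *ᵥ u)) := by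
    rw [dotProduct_comm]; rfl
  calc (star u ⬝ᵥ N *ᵥ u).re
      ≤ ‖star u ⬝ᵥ N *ᵥ u‖ := Complex.re_le_norm _
    _ = ‖@inner ℂ _ _ X ((WithLp.equiv 2 (n → ℂ)).symm (N *ᵥ u))‖ := by rw [h1]
    _ ≤ ‖X‖ * ‖(WithLp.equiv 2 (n → ℂ)).symm (N *ᵥ u)‖ := norm_inner_le_norm _ _
    _ ≤ ‖X‖ * (‖N‖ * ‖X‖) := by
        refine mul_le_mul_of_nonneg_left ?_ (norm_nonneg _)
        exact N.l2_opNorm_mulVec X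
    _ = ‖N‖ * (‖X‖ * ‖X‖) := by ring

lemma norm_sq_le_of_psd (M N : Matrix n n ℂ) (h : (N - M * Mᴴ).PosSemidef) :
    ‖M‖ * ‖M‖ ≤ ‖N‖ := by
  have hN : 0 ≤ ‖N‖ := norm_nonneg _
  have hMle : ‖Mᴴ‖ ≤ Real.sqrt ‖N‖ := by
    rw [l2_opNorm_def]
    refine ContinuousLinearMap.opNorm_le_bound _ (Real.sqrt_nonneg _) fun x => ?_
    set u : n → ℂ := WithLp.equiv 2 (n → ℂ) x with hu
    have hx : x = (WithLp.equiv 2 (n → ℂ)).symm u := rfl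
    set y : n → ℂ := Mᴴ *ᵥ u with hy
    show ‖(WithLp.equiv 2 (n → ℂ)).symm (Mᴴ *ᵥ u)‖ ≤ Real.sqrt ‖N‖ * ‖x‖
    set Y : EuclideanSpace ℂ n := (WithLp.equiv 2 (n → ℂ)).symm y with hY
    have e1 : star u ⬝ᵥ (M * Mᴴ) *ᵥ u = star y ⬝ᵥ y := by
      rw [← mulVec_mulVec, dotProduct_mulVec, hy, star_mulVec, conjTranspose_conjTranspose]
    have e2 : star y ⬝ᵥ y = (‖Y‖ : ℂ) ^ 2 := by
      rw [show star y ⬝ᵥ y = @inner ℂ _ _ Y Y from dotProduct_comm _ _, inner_self_eq_norm_sq_to_K]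
      norm_cast
    have e3 : (star u ⬝ᵥ (M * Mᴴ) *ᵥ u).re ≤ (star u ⬝ᵥ N *ᵥ u).re := by
      have := h.dotProduct_mulVec_nonneg u
      rw [sub_mulVec, dotProduct_sub] at this
      have := (Complex.le_def.mp this).1
      simpa using sub_nonneg.mp (by simpa using this)
    have e4 : ‖Y‖ ^ 2 ≤ ‖N‖ * (‖x‖ * ‖x‖) := by
      have heq : (star u ⬝ᵥ (M * Mᴴ) *ᵥ u).re = ‖Y‖ ^ 2 := by
        rw [e1, e2]; norm_cast
      calc ‖Y‖ ^ 2 = (star u ⬝ᵥ (M * Mᴴ) *ᵥ u).re := heq.symm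
        _ ≤ (star u ⬝ᵥ N *ᵥ u).re := e3
        _ ≤ ‖N‖ * (‖x‖ * ‖x‖) := by simpa [hx] using rayleigh_le N u
    have hfin : ‖Y‖ ≤ Real.sqrt (‖N‖ * (‖x‖ * ‖x‖)) := by
      rw [← Real.sqrt_sq (norm_nonneg Y)]
      exact Real.sqrt_le_sqrt e4
    calc ‖Y‖ ≤ Real.sqrt (‖N‖ * (‖x‖ * ‖x‖)) := hfin
      _ = Real.sqrt ‖N‖ * ‖x‖ := by
          rw [Real.sqrt_mul hN, Real.sqrt_mul_self (norm_nonneg x)]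
  have hM : ‖M‖ ≤ Real.sqrt ‖N‖ := by rwa [l2_opNorm_conjTranspose] at hMle
  calc ‖M‖ * ‖M‖ ≤ Real.sqrt ‖N‖ * Real.sqrt ‖N‖ :=
        mul_le_mul hM hM (norm_nonneg _) (Real.sqrt_nonneg _)
    _ = ‖N‖ := Real.mul_self_sqrt hN

noncomputable instance : CStarAlgebra (Matrix n n ℂ) :=
  Matrix.instCStarAlgebra

lemma map_hadamard (A B : Matrix n n ℝ) :
    (Matrix.hadamard A B).map (algebraMap ℝ ℂ)
      = Matrix.hadamard (A.map (algebraMap ℝ ℂ)) (B.map (algebraMap ℝ ℂ)) := by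
  ext i j
  simp [map_apply]

lemma map_gram (A : Matrix n n ℝ) :
    (A * Aᵀ).map (algebraMap ℝ ℂ)
      = (A.map (algebraMap ℝ ℂ)) * (A.map (algebraMap ℝ ℂ))ᴴ := by
  ext i j
  simp only [map_apply, mul_apply, conjTranspose_apply, transpose_apply, Complex.coe_algebraMap,
    Complex.star_def, Complex.conj_ofReal]
  push_cast
  rfl

end RhoAux

/-- `ρ(A∘B)² ≤ ρ(AAᵀ ∘ BBᵀ)` for real square matrices, where `∘` is the Hadamard
product. -/
theorem rho_hadamard_sq_le {n : Type*} [Fintype n] [DecidableEq n]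
    (A B : Matrix n n ℝ) :
    rho (Matrix.hadamard A B) ^ 2
      ≤ rho (Matrix.hadamard (A * Aᵀ) (B * Bᵀ)) := by
  cases isEmpty_or_nonempty n with
  | inl h =>
      have : ∀ C : Matrix n n ℝ, rho C = 0 := by
        intro C
        simp [rho, spectralRadius, spectrum.of_subsingleton]
      simp [this]
  | inr h =>
      classical
      open scoped ComplexOrder Matrix.Norms.L2Operator in
      set a := A.map (algebraMap ℝ ℂ) with ha
      set b := B.map (algebraMap ℝ ℂ) with hb
      set M := (Matrix.hadamard A B).map (algebraMap ℝ ℂ) with hMdef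
      set N := (Matrix.hadamard (A * Aᵀ) (B * Bᵀ)).map (algebraMap ℝ ℂ) with hNdef
      have hM : M = Matrix.hadamard a b := map_hadamard A B
      have hN : N = Matrix.hadamard (a * aᴴ) (b * bᴴ) := by
        rw [hNdef, map_hadamard, ← map_gram, ← map_gram]
      have hpsd : (N - M * Mᴴ).PosSemidef := by
        rw [hN, hM]; exact schur_psd a b
      have hNsa : IsSelfAdjoint N := by
        rw [hN]; exact (hadamard_hermitian a b)
      -- spectral radius facts
      have h1 : spectralRadius ℂ M ≤ (‖M‖₊ : ENNReal) := spectrum.spectralRadius_le_nnnorm M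
      have h2 : spectralRadius ℂ N = (‖N‖₊ : ENNReal) := hNsa.spectralRadius_eq_nnnorm
      have hrhoM : rho (Matrix.hadamard A B) ≤ ‖M‖ := by
        rw [rho, ← hMdef]
        have := ENNReal.toReal_mono (by simp) h1
        simpa using this
      have hrhoN : rho (Matrix.hadamard (A * Aᵀ) (B * Bᵀ)) = ‖N‖ := by
        rw [rho, ← hNdef, h2]
        simp
      have hnn : 0 ≤ rho (Matrix.hadamard A B) := ENNReal.toReal_nonneg
      calc rho (Matrix.hadamard A B) ^ 2
          ≤ ‖M‖ ^ 2 := by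
            exact pow_le_pow_left₀ hnn hrhoM 2
        _ = ‖M‖ * ‖M‖ := sq ‖M‖
        _ ≤ ‖N‖ := norm_sq_le_of_psd M N hpsd
        _ = rho (Matrix.hadamard (A * Aᵀ) (B * Bᵀ)) := hrhoN.symm
end
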